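/- arXiv:1104.1295 — 8 statements merged into one kernel-verified Lean document; each statement's English description precedes it below -/
import Mathlib

section
/- If B is a latin bitrade in Q_k^n (with k ≥ 2, n ≥ 1) and B is nonempty, then |B| ≥ 2^n. -/
/-- The 1-dimensional face (line) of `Q_k^n` in direction `i` through the point `a`. -/
def line {k n : ℕ} (i : Fin n) (a : Fin n → Fin k) : Set (Fin n → Fin k) :=
  {x | ∀ j, j ≠ i → x j = a j}

/-- `B ⊆ Q_k^n` is a latin bitrade if it meets every 1-dimensional face in 0 or 2 points. -/
def IsLatinBitrade {k n : ℕ} (B : Set (Fin n → Fin k)) : Prop :=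
  ∀ (i : Fin n) (a : Fin n → Fin k),
    (B ∩ line i a).ncard = 0 ∨ (B ∩ line i a).ncard = 2

lemma snoc_mem_line_iff {k n : ℕ} (i : Fin n) (a x : Fin n → Fin k) (c : Fin k) :
    (Fin.snoc x c : Fin (n+1) → Fin k) ∈ line i.castSucc (Fin.snoc a c) ↔ x ∈ line i a := by
  constructor
  · intro h j hj
    have := h j.castSucc (by simpa [Fin.castSucc_inj] using hj)
    simpa using this
  · intro h j
    refine Fin.lastCases ?_ ?_ j
    · intro _; simp
    · intro j' hj'
      simp only [Fin.snoc_castSucc]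
      exact h j' (by simpa [Fin.castSucc_inj] using hj')

lemma even_line_bound (k : ℕ) : ∀ (n : ℕ) (B : Set (Fin n → Fin k)),
    (∀ (i : Fin n) (a : Fin n → Fin k), Even (B ∩ line i a).ncard) →
    B.Nonempty → 2 ^ n ≤ B.ncard := by
  intro n
  induction n with
  | zero =>
    intro B _ hne
    simpa [Nat.one_le_iff_ne_zero, Nat.pos_iff_ne_zero] using (Set.ncard_pos B.toFinite).mpr hne
  | succ n ih =>
    intro B hB hne
    obtain ⟨b, hb⟩ := hne
    -- slices
    set slice : Fin k → Set (Fin n → Fin k) :=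
      fun c => {x | (Fin.snoc x c : Fin (n+1) → Fin k) ∈ B} with hslice
    have slice_good : ∀ c (i : Fin n) (a : Fin n → Fin k),
        Even ((slice c ∩ line i a)).ncard := by
      intro c i a
      have himg : (fun x : Fin n → Fin k => (Fin.snoc x c : Fin (n+1) → Fin k)) ''
          (slice c ∩ line i a) = B ∩ line i.castSucc (Fin.snoc a c) := by
        ext y
        constructor
        · rintro ⟨x, ⟨hx1, hx2⟩, rfl⟩
          exact ⟨hx1, (snoc_mem_line_iff i a x c).mpr hx2⟩
        · rintro ⟨hy1, hy2⟩
          have hyl : y (Fin.last n) = c := by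
            have := hy2 (Fin.last n) (by
              intro h; exact absurd h.symm (Fin.castSucc_lt_last i).ne)
            simpa using this
          have hy : (Fin.snoc (Fin.init y) c : Fin (n+1) → Fin k) = y := by
            rw [← hyl]; exact Fin.snoc_init_self y
          refine ⟨Fin.init y, ⟨?_, ?_⟩, hy⟩
          · show (Fin.snoc (Fin.init y) c : Fin (n+1) → Fin k) ∈ B
            rw [hy]; exact hy1
          · exact (snoc_mem_line_iff i a (Fin.init y) c).mp (by rw [hy]; exact hy2)
      have hinj : Function.Injective
          (fun x : Fin n → Fin k => (Fin.snoc x c : Fin (n+1) → Fin k)) := by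
        intro x y hxy
        funext j
        have := congrFun hxy j.castSucc
        simpa using this
      have := Set.ncard_image_of_injective (slice c ∩ line i a) hinj
      rw [himg] at this
      rw [← this]
      exact hB i.castSucc (Fin.snoc a c)
    -- the vertical line through b
    have hbline : b ∈ B ∩ line (Fin.last n) b := ⟨hb, fun j _ => rfl⟩
    have heven := hB (Fin.last n) b
    have hpos : 0 < (B ∩ line (Fin.last n) b).ncard :=
      (Set.ncard_pos (B ∩ line (Fin.last n) b).toFinite).mpr ⟨b, hbline⟩
    have h2 : 2 ≤ (B ∩ line (Fin.last n) b).ncard := by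
      obtain ⟨m, hm⟩ := heven
      omega
    have hb' : ∃ b' ∈ B ∩ line (Fin.last n) b, b' ≠ b := by
      by_contra h
      push_neg at h
      have : B ∩ line (Fin.last n) b = {b} := by
        apply Set.eq_singleton_iff_unique_mem.mpr
        exact ⟨hbline, h⟩
      rw [this, Set.ncard_singleton] at h2
      omega
    obtain ⟨b', ⟨hb'B, hb'l⟩, hb'ne⟩ := hb'
    set c0 := b (Fin.last n)
    set c1 := b' (Fin.last n)
    have hc01 : c1 ≠ c0 := by
      intro h
      apply hb'ne
      funext j
      refine Fin.lastCases ?_ ?_ j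
      · exact h
      · intro j'
        exact hb'l j'.castSucc (Fin.castSucc_lt_last j').ne
    -- slices c0, c1 nonempty
    have hs0 : (slice c0).Nonempty := ⟨Fin.init b, by
      show (Fin.snoc (Fin.init b) c0 : Fin (n+1) → Fin k) ∈ B
      rw [Fin.snoc_init_self]; exact hb⟩
    have hs1 : (slice c1).Nonempty := ⟨Fin.init b', by
      show (Fin.snoc (Fin.init b') c1 : Fin (n+1) → Fin k) ∈ B
      rw [Fin.snoc_init_self]; exact hb'B⟩
    have h0 := ih (slice c0) (slice_good c0) hs0
    have h1 := ih (slice c1) (slice_good c1) hs1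
    -- combine: images in B
    have hinj : ∀ c : Fin k, Function.Injective
        (fun x : Fin n → Fin k => (Fin.snoc x c : Fin (n+1) → Fin k)) := by
      intro c x y hxy
      funext j
      have := congrFun hxy j.castSucc
      simpa using this
    set f : Fin k → (Fin n → Fin k) → (Fin (n+1) → Fin k) :=
      fun c x => Fin.snoc x c with hf
    have hsub : f c0 '' slice c0 ∪ f c1 '' slice c1 ⊆ B := by
      rintro y (⟨x, hx, rfl⟩ | ⟨x, hx, rfl⟩) <;> exact hx
    have hdisj : Disjoint (f c0 '' slice c0) (f c1 '' slice c1) := by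
      rw [Set.disjoint_left]
      rintro y ⟨x, _, rfl⟩ ⟨x', _, heq⟩
      apply hc01
      have := congrFun heq (Fin.last n)
      simp only [hf, Fin.snoc_last] at this
      exact this
    have hcard : (f c0 '' slice c0 ∪ f c1 '' slice c1).ncard =
        (slice c0).ncard + (slice c1).ncard := by
      rw [Set.ncard_union_eq hdisj (Set.toFinite _) (Set.toFinite _),
        Set.ncard_image_of_injective _ (hinj c0),
        Set.ncard_image_of_injective _ (hinj c1)]
    have hle := Set.ncard_le_ncard hsub B.toFinite
    rw [hcard] at hle
    calc 2 ^ (n+1) = 2 ^ n + 2 ^ n := by ring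
    _ ≤ (slice c0).ncard + (slice c1).ncard := Nat.add_le_add h0 h1
    _ ≤ B.ncard := hle

theorem stmt_0 (k n : ℕ) (hk : 2 ≤ k) (hn : 1 ≤ n) (B : Set (Fin n → Fin k))
    (hB : IsLatinBitrade B) (hne : B.Nonempty) : 2 ^ n ≤ B.ncard := by
  apply even_line_bound k n B _ hne
  intro i a
  rcases hB i a with h | h <;> rw [h] <;> decide
end

section
/- Let B be a nonempty latin bitrade in Q_k^n. Then |B| = 2^n if and only if for every m-dimensional face F of Q_k^n (0 ≤ m ≤ n) the cardinality |B ∩ F| equals 0 or 2^m. -/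
/-- The face of `Q_k^n` with set `I` of free coordinates, through the point `a`.
Its dimension is `I.card`. -/
def face {k n : ℕ} (I : Finset (Fin n)) (a : Fin n → Fin k) : Set (Fin n → Fin k) :=
  {x | ∀ j, j ∉ I → x j = a j}

lemma face_congr {k n : ℕ} {I : Finset (Fin n)} {a b : Fin n → Fin k}
    (h : ∀ j ∉ I, a j = b j) : face I a = face I b := by
  ext x
  constructor <;> intro hx j hj
  · rw [hx j hj]; exact h j hj
  · rw [hx j hj]; exact (h j hj).symm

/-- Key doubling lemma: if `S` is "paired" in every direction of `J`, then `S` meets the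
face `face J s` through any of its points `s` in at least `2 ^ J.card` points. -/
lemma key_lemma {k n : ℕ} (S : Set (Fin n → Fin k)) (s : Fin n → Fin k) (hs : s ∈ S) :
    ∀ J : Finset (Fin n),
      (∀ j ∈ J, ∀ x ∈ S, ∃ y ∈ S, y j ≠ x j ∧ ∀ j', j' ≠ j → y j' = x j') →
      2 ^ J.card ≤ (S ∩ face J s).ncard := by
  intro J
  induction J using Finset.induction_on with
  | empty =>
    intro _
    have hpos : 0 < (S ∩ face (∅ : Finset (Fin n)) s).ncard :=
      (Set.ncard_pos (Set.toFinite _)).mpr ⟨s, hs, fun _ _ => rfl⟩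
    simp only [Finset.card_empty, pow_zero]; exact hpos
  | @insert j J hjJ ih =>
    intro hP
    have hle := ih (fun j' hj' => hP j' (Finset.mem_insert_of_mem hj'))
    set T := S ∩ face J s with hT
    have hex : ∀ x : Fin n → Fin k, ∃ y,
        x ∈ S → (y ∈ S ∧ y j ≠ x j ∧ ∀ j', j' ≠ j → y j' = x j') := by
      intro x
      by_cases hx : x ∈ S
      · obtain ⟨y, hyS, hy⟩ := hP j (Finset.mem_insert_self j J) x hx
        exact ⟨y, fun _ => ⟨hyS, hy⟩⟩
      · exact ⟨x, fun h => (hx h).elim⟩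
    choose f hf using hex
    have hsub : T ∪ f '' T ⊆ S ∩ face (insert j J) s := by
      rintro z (⟨hzS, hzF⟩ | ⟨x, ⟨hxS, hxF⟩, rfl⟩)
      · exact ⟨hzS, fun j' hj' => hzF j' (fun h => hj' (Finset.mem_insert_of_mem h))⟩
      · obtain ⟨hfS, hfj, hfo⟩ := hf x hxS
        refine ⟨hfS, fun j' hj' => ?_⟩
        have hj'j : j' ≠ j := fun h => hj' (h ▸ Finset.mem_insert_self j J)
        rw [hfo j' hj'j]
        exact hxF j' (fun h => hj' (Finset.mem_insert_of_mem h))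
    have hinj : Set.InjOn f T := by
      rintro x ⟨hxS, hxF⟩ y ⟨hyS, hyF⟩ hxy
      obtain ⟨_, _, hxo⟩ := hf x hxS
      obtain ⟨_, _, hyo⟩ := hf y hyS
      funext j'
      by_cases h : j' = j
      · subst h; rw [hxF j' hjJ, hyF j' hjJ]
      · rw [← hxo j' h, hxy, hyo j' h]
    have hdisj : Disjoint T (f '' T) := by
      rw [Set.disjoint_left]
      rintro z ⟨hzS, hzF⟩ ⟨x, ⟨hxS, hxF⟩, hfx⟩
      obtain ⟨_, hfj, _⟩ := hf x hxS
      apply hfj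
      rw [hfx, hzF j hjJ, hxF j hjJ]
    have hcard : (T ∪ f '' T).ncard = 2 * T.ncard := by
      rw [Set.ncard_union_eq hdisj (Set.toFinite _) (Set.toFinite _),
        Set.ncard_image_of_injOn hinj]
      ring
    calc 2 ^ (insert j J).card = 2 * 2 ^ J.card := by
          rw [Finset.card_insert_of_notMem hjJ, pow_succ]; ring
      _ ≤ 2 * T.ncard := Nat.mul_le_mul_left 2 hle
      _ = (T ∪ f '' T).ncard := hcard.symm
      _ ≤ _ := Set.ncard_le_ncard hsub (Set.toFinite _)

theorem stmt_1 (k n : ℕ) (B : Set (Fin n → Fin k))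
    (hB : IsLatinBitrade B) (hne : B.Nonempty) :
    B.ncard = 2 ^ n ↔
      ∀ (I : Finset (Fin n)) (a : Fin n → Fin k),
        (B ∩ face I a).ncard = 0 ∨ (B ∩ face I a).ncard = 2 ^ I.card := by
  classical
  constructor
  · intro hcard I a
    by_cases hBa : (B ∩ face I a).Nonempty
    swap
    · left; rw [Set.not_nonempty_iff_eq_empty.mp hBa, Set.ncard_empty]
    right
    obtain ⟨b, hbB, hbF⟩ := hBa
    -- pairing property of B, in every direction
    have hpair : ∀ (j : Fin n), ∀ x ∈ B, ∃ y ∈ B,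
        y j ≠ x j ∧ ∀ j', j' ≠ j → y j' = x j' := by
      intro j x hx
      have hx' : x ∈ B ∩ line j x := ⟨hx, fun _ _ => rfl⟩
      have h2 : (B ∩ line j x).ncard = 2 := by
        rcases hB j x with h | h
        · exfalso
          have hpos := (Set.ncard_pos (Set.toFinite (B ∩ line j x))).mpr ⟨x, hx'⟩
          omega
        · exact h
      obtain ⟨y, hy, hyx⟩ := Set.exists_ne_of_one_lt_ncard (show 1 < (B ∩ line j x).ncard by omega) x
      refine ⟨y, hy.1, ?_, hy.2⟩
      intro h
      apply hyx
      funext j'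
      by_cases hj : j' = j
      · subst hj; exact h
      · exact hy.2 j' hj
    set π : (Fin n → Fin k) → (Fin n → Fin k) := fun x j => if j ∈ I then a j else x j with hπ
    have hπ_out : ∀ x : Fin n → Fin k, ∀ j ∉ I, π x j = x j := fun x j hj => if_neg hj
    have hπ_in : ∀ x : Fin n → Fin k, ∀ j ∈ I, π x j = a j := fun x j hj => if_pos hj
    set S : Set (Fin n → Fin k) := π '' B with hS
    have hfaceπ : ∀ x : Fin n → Fin k, face I (π x) = face I x :=
      fun x => face_congr (fun j hj => hπ_out x j hj)
    -- pairing property of S in directions outside I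
    have hSpair : ∀ j ∈ Iᶜ, ∀ x ∈ S, ∃ y ∈ S,
        y j ≠ x j ∧ ∀ j', j' ≠ j → y j' = x j' := by
      rintro j hj x ⟨u, hu, rfl⟩
      obtain ⟨y, hyB, hyj, hyo⟩ := hpair j u hu
      have hjI : j ∉ I := Finset.mem_compl.mp hj
      refine ⟨π y, ⟨y, hyB, rfl⟩, ?_, ?_⟩
      · rw [hπ_out y j hjI, hπ_out u j hjI]; exact hyj
      · intro j' hj'
        by_cases hj'I : j' ∈ I
        · rw [hπ_in y j' hj'I, hπ_in u j' hj'I]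
        · rw [hπ_out y j' hj'I, hπ_out u j' hj'I]; exact hyo j' hj'
    have hSface : S ∩ face Iᶜ (π b) = S := by
      apply Set.inter_eq_self_of_subset_left
      rintro _ ⟨x, hx, rfl⟩ j hj
      have hjI : j ∈ I := by simpa using hj
      rw [hπ_in x j hjI, hπ_in b j hjI]
    have hScard : 2 ^ (Iᶜ.card) ≤ S.ncard := by
      have := key_lemma S (π b) ⟨b, hbB, rfl⟩ Iᶜ hSpair
      rwa [hSface] at this
    have hpiece : ∀ c ∈ S, 2 ^ I.card ≤ (B ∩ face I c).ncard := by
      rintro _ ⟨x, hxB, rfl⟩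
      rw [hfaceπ x]
      exact key_lemma B x hxB I (fun j _ => hpair j)
    -- decompose B along the parallel faces
    set Sf : Finset (Fin n → Fin k) := (Set.toFinite S).toFinset with hSf
    have hdecomp : (Set.toFinite B).toFinset
        = Sf.biUnion (fun c => (Set.toFinite (B ∩ face I c)).toFinset) := by
      ext x
      simp only [Set.Finite.mem_toFinset, Finset.mem_biUnion, hSf]
      constructor
      · intro hx
        exact ⟨π x, ⟨x, hx, rfl⟩, hx, by rw [hfaceπ x]; exact fun j hj => rfl⟩
      · rintro ⟨c, _, hx, _⟩; exact hx
    have hdisjf : ∀ c ∈ Sf, ∀ c' ∈ Sf, c ≠ c' →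
        Disjoint ((Set.toFinite (B ∩ face I c)).toFinset)
          ((Set.toFinite (B ∩ face I c')).toFinset) := by
      intro c hc c' hc' hcc'
      rw [Finset.disjoint_left]
      intro x hx hx'
      simp only [Set.Finite.mem_toFinset, hSf] at hx hx' hc hc'
      apply hcc'
      obtain ⟨u, _, rfl⟩ := hc
      obtain ⟨v, _, rfl⟩ := hc'
      funext j
      by_cases hj : j ∈ I
      · rw [hπ_in u j hj, hπ_in v j hj]
      · rw [← hx.2 j hj, ← hx'.2 j hj]
    have hsum : ∑ c ∈ Sf, (B ∩ face I c).ncard = 2 ^ n := by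
      have h1 : (Set.toFinite B).toFinset.card
          = ∑ c ∈ Sf, ((Set.toFinite (B ∩ face I c)).toFinset).card := by
        rw [hdecomp]; exact Finset.card_biUnion hdisjf
      rw [← hcard, Set.ncard_eq_toFinset_card B (Set.toFinite B), h1]
      exact Finset.sum_congr rfl fun c _ =>
        Set.ncard_eq_toFinset_card _ (Set.toFinite _)
    -- the face through b
    have hc0 : π b ∈ Sf := by
      simp only [Set.Finite.mem_toFinset, hSf]
      exact ⟨b, hbB, rfl⟩
    have hfaceab : face I a = face I (π b) := by
      rw [hfaceπ b]
      exact face_congr (fun j hj => (hbF j hj).symm)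
    have hsplit : (B ∩ face I (π b)).ncard
        + ∑ c ∈ Sf.erase (π b), (B ∩ face I c).ncard = 2 ^ n := by
      rw [← hsum]
      exact Finset.add_sum_erase Sf (fun c => (B ∩ face I c).ncard) hc0
    have hlowrest : (Sf.erase (π b)).card * 2 ^ I.card
        ≤ ∑ c ∈ Sf.erase (π b), (B ∩ face I c).ncard := by
      have := Finset.card_nsmul_le_sum (Sf.erase (π b))
        (fun c => (B ∩ face I c).ncard) (2 ^ I.card)
        (fun c hc => hpiece c (by
          have := Finset.mem_of_mem_erase hc
          simpa only [Set.Finite.mem_toFinset, hSf] using this))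
      simpa [smul_eq_mul] using this
    have hSfcard : 2 ^ (n - I.card) ≤ Sf.card := by
      have h1 : Sf.card = S.ncard := (Set.ncard_eq_toFinset_card S (Set.toFinite S)).symm
      have h2 : Iᶜ.card = n - I.card := by
        rw [Finset.card_compl, Fintype.card_fin]
      rw [h1, ← h2]
      exact hScard
    have hIle : I.card ≤ n := by
      simpa using Finset.card_le_univ I
    have hpow : 2 ^ (n - I.card) * 2 ^ I.card = 2 ^ n := by
      rw [← pow_add, Nat.sub_add_cancel hIle]
    have hge : 2 ^ I.card ≤ (B ∩ face I (π b)).ncard :=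
      hpiece (π b) ⟨b, hbB, rfl⟩
    have hle : (B ∩ face I (π b)).ncard ≤ 2 ^ I.card := by
      have hcardSfpos : 1 ≤ Sf.card := Finset.card_pos.mpr ⟨π b, hc0⟩
      have herase : (Sf.erase (π b)).card = Sf.card - 1 :=
        Finset.card_erase_of_mem hc0
      have h1 : (Sf.card - 1) * 2 ^ I.card
          ≤ ∑ c ∈ Sf.erase (π b), (B ∩ face I c).ncard := by
        rw [← herase]; exact hlowrest
      have h2 : (2 ^ (n - I.card) - 1) * 2 ^ I.card ≤ (Sf.card - 1) * 2 ^ I.card :=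
        Nat.mul_le_mul_right _ (by omega)
      have hposI : 0 < 2 ^ I.card := Nat.pow_pos (by norm_num)
      have hposn : 0 < 2 ^ (n - I.card) := Nat.pow_pos (by norm_num)
      have hsub : (2 ^ (n - I.card) - 1) * 2 ^ I.card = 2 ^ n - 2 ^ I.card := by
        rw [Nat.sub_mul, one_mul, hpow]
      omega
    rw [hfaceab]
    omega
  · intro h
    obtain ⟨b, hb⟩ := hne
    have hface : face (Finset.univ : Finset (Fin n)) b = Set.univ := by
      ext x; simp [face]
    have h2 := h Finset.univ b
    rw [hface, Set.inter_univ] at h2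
    rcases h2 with h0 | h2
    · have := (Set.ncard_pos (Set.toFinite B)).mpr ⟨b, hb⟩
      omega
    · simpa using h2
end

section
/- Let B be a nonempty latin bitrade in Q_k^n. Then |B| = 2^n if and only if for each coordinate direction i ∈ {1,…,n} the set B meets exactly two of the k hyperfaces {x ∈ Q_k^n : x_i = a}, a ∈ Q_k. -/
/-- The hyperface of direction `i` determined by the value `a`. -/
def hyperface {k n : ℕ} (i : Fin n) (a : Fin k) : Set (Fin n → Fin k) :=
  {x | x i = a}

/-- General line, over an arbitrary index type. -/
def gline {k : ℕ} {ι : Type} (i : ι) (a : ι → Fin k) : Set (ι → Fin k) :=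
  {x | ∀ j, j ≠ i → x j = a j}

/-- General bitrade over an arbitrary index type. -/
def GBitrade {k : ℕ} {ι : Type} (B : Set (ι → Fin k)) : Prop :=
  ∀ (i : ι) (a : ι → Fin k),
    (B ∩ gline i a).ncard = 0 ∨ (B ∩ gline i a).ncard = 2

/-- Every point of a bitrade has a "mate" along each direction. -/
lemma mate {k : ℕ} {ι : Type} [Fintype ι] {B : Set (ι → Fin k)}
    (hB : GBitrade B) (i : ι) {x : ι → Fin k} (hx : x ∈ B) :
    ∃ y ∈ B, y i ≠ x i ∧ ∀ j, j ≠ i → y j = x j := by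
  classical
  have hxl : x ∈ B ∩ gline i x := ⟨hx, fun j _ => rfl⟩
  have h2 : (B ∩ gline i x).ncard = 2 := by
    rcases hB i x with h | h
    · rw [Set.ncard_eq_zero (Set.toFinite _)] at h
      exact absurd (h ▸ hxl) (Set.notMem_empty x)
    · exact h
  obtain ⟨u, v, huv, hset⟩ := Set.ncard_eq_two.mp h2
  have hu : u ∈ B ∩ gline i x := hset ▸ (by simp : u ∈ ({u, v} : Set _))
  have hv : v ∈ B ∩ gline i x := hset ▸ (by simp : v ∈ ({u, v} : Set _))
  have hxm : x ∈ ({u, v} : Set _) := hset ▸ hxl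
  have key : ∀ y, y ∈ B ∩ gline i x → y ≠ x →
      ∃ y' ∈ B, y' i ≠ x i ∧ ∀ j, j ≠ i → y' j = x j := by
    intro y hy hyx
    refine ⟨y, hy.1, ?_, hy.2⟩
    intro hyi
    apply hyx
    funext j
    by_cases hj : j = i
    · subst hj; exact hyi
    · exact hy.2 j hj
  rcases hxm with hx1 | hx2
  · subst hx1
    exact key v hv (Ne.symm huv)
  · simp only [Set.mem_singleton_iff] at hx2
    subst hx2
    exact key u hu huv

/-- Restriction to the coordinates different from `i`. -/
def res {k : ℕ} {ι : Type} (i : ι) (x : ι → Fin k) : {j : ι // j ≠ i} → Fin k :=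
  fun j => x j.1

lemma res_injOn {k : ℕ} {ι : Type} (i : ι) (a : Fin k) :
    Set.InjOn (res i) {x : ι → Fin k | x i = a} := by
  intro x hx y hy h
  funext j
  by_cases hj : j = i
  · subst hj
    simp only [Set.mem_setOf_eq] at hx hy
    rw [hx, hy]
  · exact congrFun h ⟨j, hj⟩

lemma slice_bitrade {k : ℕ} {ι : Type} [DecidableEq ι] {B : Set (ι → Fin k)}
    (hB : GBitrade B) (i : ι) (a : Fin k) :
    GBitrade (res i '' (B ∩ {x | x i = a})) := by
  intro i' a'
  set abar : ι → Fin k := fun j => if h : j = i then a else a' ⟨j, h⟩ with habar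
  have key : (res i '' (B ∩ {x | x i = a})) ∩ gline i' a'
      = res i '' (B ∩ gline i'.1 abar) := by
    ext z
    constructor
    · rintro ⟨⟨x, ⟨hxB, hxi⟩, rfl⟩, hz⟩
      refine ⟨x, ⟨hxB, ?_⟩, rfl⟩
      intro j hj
      by_cases hji : j = i
      · subst hji
        simp only [Set.mem_setOf_eq] at hxi
        simp [habar, hxi]
      · have hne' : (⟨j, hji⟩ : {j : ι // j ≠ i}) ≠ i' :=
          fun h => hj (congrArg Subtype.val h)
        have := hz ⟨j, hji⟩ hne'
        simpa [habar, res, hji] using this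
    · rintro ⟨x, ⟨hxB, hxl⟩, rfl⟩
      have hxi : x i = a := by
        have := hxl i (Ne.symm i'.2)
        simpa [habar] using this
      refine ⟨⟨x, ⟨hxB, hxi⟩, rfl⟩, ?_⟩
      intro j hj
      have hj1 : j.1 ≠ i'.1 := fun h => hj (Subtype.ext h)
      have := hxl j.1 hj1
      simpa [habar, res, j.2] using this
  have hsub : (B ∩ gline i'.1 abar) ⊆ {x : ι → Fin k | x i = a} := by
    intro x hx
    have := hx.2 i (Ne.symm i'.2)
    simpa [habar] using this
  rw [key, Set.ncard_image_of_injOn ((res_injOn i a).mono hsub)]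
  exact hB i'.1 abar

lemma slice_ncard {k : ℕ} {ι : Type} (i : ι) (a : Fin k) (B : Set (ι → Fin k)) :
    (res i '' (B ∩ {x | x i = a})).ncard = (B ∩ {x | x i = a}).ncard :=
  Set.ncard_image_of_injOn ((res_injOn i a).mono Set.inter_subset_right)

/-- The lower bound: a nonempty bitrade on an index set of size `n` has at least `2^n` points. -/
lemma glower {k : ℕ} : ∀ (n : ℕ) (ι : Type) [Fintype ι] [DecidableEq ι]
    (B : Set (ι → Fin k)), Fintype.card ι = n → GBitrade B → B.Nonempty →
    2 ^ n ≤ B.ncard := by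
  intro n
  induction n with
  | zero =>
    intro ι _ _ B hcard hB hne
    exact Nat.succ_le_of_lt ((Set.ncard_pos (Set.toFinite B)).mpr hne)
  | succ n ih =>
    intro ι _ _ B hcard hB hne
    have hni : Nonempty ι := by
      rw [← Fintype.card_pos_iff, hcard]; omega
    obtain ⟨i⟩ := hni
    obtain ⟨x, hx⟩ := hne
    obtain ⟨y, hyB, hyi, hyj⟩ := mate hB i hx
    have hcard' : Fintype.card {j : ι // j ≠ i} = n := by
      have : Fintype.card {j : ι // j ≠ i} = Fintype.card ι - 1 := by
        simp [Fintype.card_subtype_compl, Fintype.card_subtype_eq]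
      omega
    have bound : ∀ b : Fin k, (B ∩ {z | z i = b}).Nonempty →
        2 ^ n ≤ (B ∩ {z | z i = b}).ncard := by
      intro b hb
      have h1 := slice_bitrade hB i b
      have h2 := ih {j : ι // j ≠ i} (res i '' (B ∩ {z | z i = b})) hcard' h1
        (hb.image _)
      rwa [slice_ncard] at h2
    have hA := bound (x i) ⟨x, hx, rfl⟩
    have hC := bound (y i) ⟨y, hyB, rfl⟩
    have hdisj : Disjoint (B ∩ {z | z i = x i}) (B ∩ {z | z i = y i}) := by
      rw [Set.disjoint_left]
      rintro z ⟨_, h1⟩ ⟨_, h2⟩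
      simp only [Set.mem_setOf_eq] at h1 h2
      exact hyi (h2 ▸ h1 ▸ rfl)
    calc 2 ^ (n + 1) = 2 ^ n + 2 ^ n := by ring
      _ ≤ (B ∩ {z | z i = x i}).ncard + (B ∩ {z | z i = y i}).ncard := add_le_add hA hC
      _ = ((B ∩ {z | z i = x i}) ∪ (B ∩ {z | z i = y i})).ncard :=
          (Set.ncard_union_eq hdisj (Set.toFinite _) (Set.toFinite _)).symm
      _ ≤ B.ncard := Set.ncard_le_ncard
          (Set.union_subset Set.inter_subset_left Set.inter_subset_left) (Set.toFinite B)

lemma slice_lower {k n : ℕ} {B : Set (Fin n → Fin k)} (hB : GBitrade B)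
    (i : Fin n) (a : Fin k) (hne : (B ∩ {x | x i = a}).Nonempty) :
    2 ^ (n - 1) ≤ (B ∩ {x | x i = a}).ncard := by
  have hc : Fintype.card {j : Fin n // j ≠ i} = n - 1 := by
    have : Fintype.card {j : Fin n // j ≠ i} = Fintype.card (Fin n) - 1 := by
      simp [Fintype.card_subtype_compl, Fintype.card_subtype_eq]
    simpa using this
  have h := glower (n - 1) {j : Fin n // j ≠ i} (res i '' (B ∩ {x | x i = a})) hc
    (slice_bitrade hB i a) (hne.image _)
  rwa [slice_ncard] at h

theorem stmt_2 (k n : ℕ) (B : Set (Fin n → Fin k))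
    (hB : IsLatinBitrade B) (hne : B.Nonempty) :
    B.ncard = 2 ^ n ↔
      ∀ i : Fin n, {a : Fin k | (B ∩ hyperface i a).Nonempty}.ncard = 2 := by
  classical
  have hB' : GBitrade B := hB
  have hge : 2 ^ n ≤ B.ncard := glower n (Fin n) B (by simp) hB' hne
  constructor
  · intro hcard i
    have hn1 : 0 < n := i.pos
    set V := {a : Fin k | (B ∩ hyperface i a).Nonempty} with hV
    obtain ⟨x, hx⟩ := hne
    obtain ⟨y, hyB, hyi, _⟩ := mate hB' i hx
    have hlt : 1 < V.ncard := by
      rw [Set.one_lt_ncard_iff (Set.toFinite _)]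
      exact ⟨x i, y i, ⟨x, hx, rfl⟩, ⟨y, hyB, rfl⟩, fun h => hyi h.symm⟩
    by_contra hV2
    have hlt2 : 2 < V.ncard := by omega
    rw [Set.two_lt_ncard_iff (Set.toFinite _)] at hlt2
    obtain ⟨a, b, c, ha, hb, hc, hab, hac, hbc⟩ := hlt2
    have hslice : ∀ d : Fin k, d ∈ V → 2 ^ (n - 1) ≤ (B ∩ {z | z i = d}).ncard := by
      intro d hd
      exact slice_lower hB' i d hd
    have hd1 : Disjoint (B ∩ {z | z i = a}) (B ∩ {z | z i = b}) := by
      rw [Set.disjoint_left]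
      rintro z ⟨_, h1⟩ ⟨_, h2⟩
      simp only [Set.mem_setOf_eq] at h1 h2
      exact hab (h1 ▸ h2 ▸ rfl)
    have hd2 : Disjoint ((B ∩ {z | z i = a}) ∪ (B ∩ {z | z i = b})) (B ∩ {z | z i = c}) := by
      rw [Set.disjoint_left]
      rintro z (⟨_, h1⟩ | ⟨_, h1⟩) ⟨_, h2⟩ <;>
        simp only [Set.mem_setOf_eq] at h1 h2
      · exact hac (h1 ▸ h2 ▸ rfl)
      · exact hbc (h1 ▸ h2 ▸ rfl)
    have hsum : 3 * 2 ^ (n - 1) ≤ B.ncard := by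
      calc 3 * 2 ^ (n - 1)
          = 2 ^ (n - 1) + 2 ^ (n - 1) + 2 ^ (n - 1) := by ring
        _ ≤ (B ∩ {z | z i = a}).ncard + (B ∩ {z | z i = b}).ncard
              + (B ∩ {z | z i = c}).ncard :=
            add_le_add (add_le_add (hslice a ha) (hslice b hb)) (hslice c hc)
        _ = ((B ∩ {z | z i = a}) ∪ (B ∩ {z | z i = b})).ncard
              + (B ∩ {z | z i = c}).ncard := by
            rw [Set.ncard_union_eq hd1 (Set.toFinite _) (Set.toFinite _)]
        _ = (((B ∩ {z | z i = a}) ∪ (B ∩ {z | z i = b})) ∪ (B ∩ {z | z i = c})).ncard :=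
            (Set.ncard_union_eq hd2 (Set.toFinite _) (Set.toFinite _)).symm
        _ ≤ B.ncard := Set.ncard_le_ncard
            (Set.union_subset (Set.union_subset Set.inter_subset_left Set.inter_subset_left)
              Set.inter_subset_left) (Set.toFinite B)
    have hpow : 2 ^ n = 2 * 2 ^ (n - 1) := by
      rw [← pow_succ']
      congr 1
      omega
    rw [hcard, hpow] at hsum
    have : 0 < 2 ^ (n - 1) := Nat.pow_pos (by norm_num)
    omega
  · intro h
    have hle : B.ncard ≤ 2 ^ n := by
      set t : Fin n → Finset (Fin k) :=
        fun i => (Set.toFinite {a : Fin k | (B ∩ hyperface i a).Nonempty}).toFinset with ht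
      have hsub : B ⊆ ↑(Fintype.piFinset t) := by
        intro x hx
        simp only [Finset.mem_coe, Fintype.mem_piFinset, ht, Set.Finite.mem_toFinset,
          Set.mem_setOf_eq]
        intro i
        exact ⟨x, hx, rfl⟩
      calc B.ncard ≤ (↑(Fintype.piFinset t) : Set (Fin n → Fin k)).ncard :=
            Set.ncard_le_ncard hsub (Set.toFinite _)
        _ = (Fintype.piFinset t).card := Set.ncard_coe_finset _
        _ = ∏ i, (t i).card := Fintype.card_piFinset t
        _ = ∏ _i : Fin n, 2 := by
            apply Finset.prod_congr rfl
            intro i _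
            rw [ht]
            rw [← Set.ncard_eq_toFinset_card _ (Set.toFinite _)]
            exact h i
        _ = 2 ^ n := by simp
    omega
end

section
/- Let B be a nonempty latin bitrade in Q_k^n. Then |B| = 2^n if and only if the subgraph of the Hamming graph Γ Q_k^n induced by B is isomorphic to the Boolean n-cube graph Γ Q_2^n (the graph on {0,1}^n in which two vertices are adjacent iff they differ in exactly one coordinate). -/
/-- The Hamming graph `Γ Q_k^n`: vertices are the points of `Q_k^n`, two vertices
are adjacent iff their Hamming distance is 1. -/
def hammingGraph (k n : ℕ) : SimpleGraph (Fin n → Fin k) where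
  Adj x y := hammingDist x y = 1
  symm := by
    constructor
    intro x y h
    rwa [hammingDist_comm]
  loopless := by
    constructor
    intro x h
    simp [hammingDist_self] at h

def box {k n : ℕ} (a b : Fin n → Fin k) : Set (Fin n → Fin k) :=
  {x | ∀ i, x i = a i ∨ x i = b i}

lemma partner {k n : ℕ} {B : Set (Fin n → Fin k)} (hB : IsLatinBitrade B)
    {x : Fin n → Fin k} (hx : x ∈ B) (i : Fin n) :
    ∃ y ∈ B, y ≠ x ∧ ∀ j, j ≠ i → y j = x j := by
  have hxl : x ∈ B ∩ line i x := ⟨hx, fun j _ => rfl⟩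
  rcases hB i x with h | h
  · rw [Set.ncard_eq_zero (Set.toFinite _)] at h
    simp [h] at hxl
  · rw [Set.ncard_eq_two] at h
    obtain ⟨p, q, hpq, hset⟩ := h
    rw [hset] at hxl
    rcases hxl with rfl | rfl
    · have hq : q ∈ B ∩ line i x := by rw [hset]; right; rfl
      exact ⟨q, hq.1, fun h => hpq h.symm, hq.2⟩
    · have hp : p ∈ B ∩ line i x := by rw [hset]; left; rfl
      exact ⟨p, hp.1, hpq, hp.2⟩

def layer {k n : ℕ} (B : Set (Fin (n+1) → Fin k)) (v : Fin k) : Set (Fin n → Fin k) :=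
  {y | (Fin.snoc y v : Fin (n+1) → Fin k) ∈ B}

lemma snoc_inj {k n : ℕ} (v : Fin k) :
    Function.Injective (fun y : Fin n → Fin k => (Fin.snoc y v : Fin (n+1) → Fin k)) := by
  intro y z h
  have := congrArg Fin.init h
  simpa [Fin.init_snoc] using this

lemma line_snoc {k n : ℕ} (B : Set (Fin (n+1) → Fin k)) (v : Fin k)
    (j : Fin n) (a : Fin n → Fin k) :
    B ∩ line j.castSucc (Fin.snoc a v)
      = (fun y => (Fin.snoc y v : Fin (n+1) → Fin k)) '' (layer B v ∩ line j a) := by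
  ext x
  constructor
  · rintro ⟨hxB, hxl⟩
    have hlast : x (Fin.last n) = v := by
      have := hxl (Fin.last n) (Fin.ne_of_gt (Fin.castSucc_lt_last j))
      simpa using this
    have hx : x = Fin.snoc (Fin.init x) v := by
      rw [← hlast]; exact (Fin.snoc_init_self x).symm
    refine ⟨Fin.init x, ⟨?_, ?_⟩, hx.symm⟩
    · show (Fin.snoc (Fin.init x) v : Fin (n+1) → Fin k) ∈ B; rwa [← hx]
    · intro j' hj'
      have h2 := hxl j'.castSucc (by simpa [Fin.castSucc_inj] using hj')
      simpa [Fin.init] using h2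
  · rintro ⟨y, ⟨hyB, hyl⟩, rfl⟩
    refine ⟨hyB, ?_⟩
    intro j' hj'
    rcases Fin.eq_castSucc_or_eq_last j' with ⟨j'', rfl⟩ | rfl
    · have hjj : j'' ≠ j := by simpa [Fin.castSucc_inj] using hj'
      simp [hyl j'' hjj]
    · simp

lemma layer_bitrade {k n : ℕ} {B : Set (Fin (n+1) → Fin k)} (hB : IsLatinBitrade B)
    (v : Fin k) : IsLatinBitrade (layer B v) := by
  intro j a
  have h := hB j.castSucc (Fin.snoc a v)
  rw [line_snoc B v j a, Set.ncard_image_of_injective _ (snoc_inj v)] at h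
  exact h

lemma eq_of_init_last {k n : ℕ} {x z : Fin (n+1) → Fin k}
    (h1 : Fin.init x = Fin.init z) (h2 : x (Fin.last n) = z (Fin.last n)) : x = z := by
  rw [← Fin.snoc_init_self x, ← Fin.snoc_init_self z, h1, h2]

lemma image_layer {k n : ℕ} (B : Set (Fin (n+1) → Fin k)) (u : Fin k) :
    (fun y => (Fin.snoc y u : Fin (n+1) → Fin k)) '' (layer B u)
      = {x ∈ B | x (Fin.last n) = u} := by
  ext x
  constructor
  · rintro ⟨y, hy, rfl⟩
    exact ⟨hy, by simp⟩
  · rintro ⟨hxB, hxl⟩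
    refine ⟨Fin.init x, ?_, ?_⟩
    · show (Fin.snoc (Fin.init x) u : Fin (n+1) → Fin k) ∈ B
      rw [← hxl, Fin.snoc_init_self]; exact hxB
    · show (Fin.snoc (Fin.init x) u : Fin (n+1) → Fin k) = x
      rw [← hxl, Fin.snoc_init_self]

lemma snoc_inj' {k n : ℕ} (v : Fin k) :
    Function.Injective (fun y : Fin n → Fin k => (Fin.snoc y v : Fin (n+1) → Fin k)) := by
  intro y z h
  have := congrArg Fin.init h
  simpa [Fin.init_snoc] using this

lemma ncard_layer {k n : ℕ} (B : Set (Fin (n+1) → Fin k)) (u : Fin k) :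
    {x ∈ B | x (Fin.last n) = u}.ncard = (layer B u).ncard := by
  rw [← image_layer, Set.ncard_image_of_injective _ (snoc_inj' u)]

lemma main (n : ℕ) : ∀ (k : ℕ) (B : Set (Fin n → Fin k)), IsLatinBitrade B → B.Nonempty →
    2^n ≤ B.ncard ∧ (B.ncard = 2^n → ∃ a b, (∀ i, a i ≠ b i) ∧ B = box a b) := by
  induction n with
  | zero =>
    intro k B hB hne
    obtain ⟨x, hx⟩ := hne
    have hBu : B = Set.univ := by
      apply Set.eq_univ_of_forall
      intro y
      have : y = x := funext fun i => i.elim0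
      rwa [this]
    constructor
    · rw [hBu]
      simp [Set.ncard_univ, Nat.card_eq_fintype_card]
    · intro _
      refine ⟨Fin.elim0, Fin.elim0, fun i => i.elim0, ?_⟩
      rw [hBu]
      ext z
      simp [box]
  | succ n ih =>
    intro k B hB hne
    obtain ⟨x, hx⟩ := hne
    set v := x (Fin.last n) with hv
    obtain ⟨y, hyB, hyx, hyl⟩ := partner hB hx (Fin.last n)
    set w := y (Fin.last n) with hw
    have hinit : Fin.init y = Fin.init x := by
      funext j
      exact hyl j.castSucc (Fin.ne_of_lt (Fin.castSucc_lt_last j))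
    have hvw : w ≠ v := by
      intro h
      exact hyx (eq_of_init_last hinit h)
    -- the two nonempty layers
    have hlv : Fin.init x ∈ layer B v := by
      show (Fin.snoc (Fin.init x) v : Fin (n+1) → Fin k) ∈ B
      rw [hv, Fin.snoc_init_self]; exact hx
    have hlw : Fin.init x ∈ layer B w := by
      show (Fin.snoc (Fin.init x) w : Fin (n+1) → Fin k) ∈ B
      rw [← hinit, hw, Fin.snoc_init_self]; exact hyB
    have ihv := ih k (layer B v) (layer_bitrade hB v) ⟨_, hlv⟩
    have ihw := ih k (layer B w) (layer_bitrade hB w) ⟨_, hlw⟩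
    -- slices
    set S : Fin k → Set (Fin (n+1) → Fin k) := fun u => {z ∈ B | z (Fin.last n) = u} with hS
    have hSsub : ∀ u, S u ⊆ B := fun u z hz => hz.1
    have hSdis : ∀ u u', u ≠ u' → Disjoint (S u) (S u') := by
      intro u u' huu
      rw [Set.disjoint_left]
      rintro z ⟨_, h1⟩ ⟨_, h2⟩
      exact huu (h1 ▸ h2)
    have hcard : ∀ u, (S u).ncard = (layer B u).ncard := fun u => ncard_layer B u
    have hunion : (S v ∪ S w).ncard = (layer B v).ncard + (layer B w).ncard := by
      rw [Set.ncard_union_eq (hSdis v w (Ne.symm hvw)) (Set.toFinite _) (Set.toFinite _),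
        hcard, hcard]
    have hlow : 2 ^ (n+1) ≤ B.ncard := by
      have h1 : (S v ∪ S w).ncard ≤ B.ncard :=
        Set.ncard_le_ncard (Set.union_subset (hSsub v) (hSsub w)) (Set.toFinite _)
      have := ihv.1
      have := ihw.1
      rw [hunion] at h1
      rw [pow_succ]
      omega
    refine ⟨hlow, ?_⟩
    intro hcardB
    -- B is covered by the two slices
    have hcover : B = S v ∪ S w := by
      apply Set.Subset.antisymm _ (Set.union_subset (hSsub v) (hSsub w))
      intro z hz
      by_contra hzn
      set u := z (Fin.last n) with hu
      have huv : u ≠ v := by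
        intro h; exact hzn (Or.inl ⟨hz, h⟩)
      have huw : u ≠ w := by
        intro h; exact hzn (Or.inr ⟨hz, h⟩)
      have hlu : Fin.init z ∈ layer B u := by
        show (Fin.snoc (Fin.init z) u : Fin (n+1) → Fin k) ∈ B
        rw [hu, Fin.snoc_init_self]; exact hz
      have ihu := (ih k (layer B u) (layer_bitrade hB u) ⟨_, hlu⟩).1
      have hdis2 : Disjoint (S v ∪ S w) (S u) :=
        Set.disjoint_union_left.mpr ⟨hSdis v u (Ne.symm huv), hSdis w u (Ne.symm huw)⟩
      have h3 : (S v ∪ S w ∪ S u).ncard ≤ B.ncard :=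
        Set.ncard_le_ncard (Set.union_subset (Set.union_subset (hSsub v) (hSsub w)) (hSsub u))
          (Set.toFinite _)
      rw [Set.ncard_union_eq hdis2 (Set.toFinite _) (Set.toFinite _), hunion, hcard] at h3
      have := ihv.1
      have := ihw.1
      rw [hcardB, pow_succ] at h3
      have hpos : 0 < 2 ^ n := Nat.pow_pos (by norm_num : 0 < 2)
      omega
    -- the two layers have size exactly 2^n
    have hsum : (layer B v).ncard + (layer B w).ncard = 2 ^ (n+1) := by
      rw [← hunion, ← hcover, hcardB]
    have hev : (layer B v).ncard = 2 ^ n := by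
      have := ihv.1; have := ihw.1; rw [pow_succ] at hsum; omega
    have hew : (layer B w).ncard = 2 ^ n := by
      have := ihv.1; rw [pow_succ] at hsum; omega
    -- the two layers are equal
    have hlayers : layer B v = layer B w := by
      apply Set.eq_of_subset_of_ncard_le _ (by rw [hev, hew]) (Set.toFinite _)
      intro t ht
      obtain ⟨z, hzB, hzne, hzl⟩ := partner hB ht (Fin.last n)
      have hzinit : Fin.init z = t := by
        funext j
        have := hzl j.castSucc (Fin.ne_of_lt (Fin.castSucc_lt_last j))
        simpa [Fin.init] using this
      have hzlast : z (Fin.last n) = w := by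
        have hz2 := hcover ▸ hzB
        rcases hz2 with ⟨_, h⟩ | ⟨_, h⟩
        · exfalso
          apply hzne
          apply eq_of_init_last
          · rw [hzinit]; simp [Fin.init_snoc]
          · rw [h]; simp
        · exact h
      show (Fin.snoc t w : Fin (n+1) → Fin k) ∈ B
      rw [← hzinit, ← hzlast, Fin.snoc_init_self]
      exact hzB
    obtain ⟨a', b', hab', hbox'⟩ := ihv.2 hev
    refine ⟨Fin.snoc a' v, Fin.snoc b' w, ?_, ?_⟩
    · intro i
      rcases Fin.eq_castSucc_or_eq_last i with ⟨j, rfl⟩ | rfl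
      · simpa using hab' j
      · simpa using Ne.symm hvw
    · ext z
      constructor
      · intro hz
        have hz2 := hcover ▸ hz
        have hinitbox : Fin.init z ∈ box a' b' := by
          rw [← hbox']
          rcases hz2 with ⟨_, h⟩ | ⟨_, h⟩
          · show (Fin.snoc (Fin.init z) v : Fin (n+1) → Fin k) ∈ B
            rw [← h, Fin.snoc_init_self]; exact hz
          · rw [hlayers]
            show (Fin.snoc (Fin.init z) w : Fin (n+1) → Fin k) ∈ B
            rw [← h, Fin.snoc_init_self]; exact hz
        intro i
        rcases Fin.eq_castSucc_or_eq_last i with ⟨j, rfl⟩ | rfl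
        · have := hinitbox j
          simpa [Fin.init] using this
        · rcases hz2 with ⟨_, h⟩ | ⟨_, h⟩
          · left; simpa using h
          · right; simpa using h
      · intro hz
        have hinitbox : Fin.init z ∈ box a' b' := by
          intro j
          have := hz j.castSucc
          simpa [Fin.init] using this
        have hlast := hz (Fin.last n)
        simp only [Fin.snoc_last] at hlast
        rcases hlast with h | h
        · have : Fin.init z ∈ layer B v := by rw [hbox']; exact hinitbox
          have := this
          show z ∈ B
          rw [← Fin.snoc_init_self z, h]
          exact this
        · have : Fin.init z ∈ layer B w := by rw [← hlayers, hbox']; exact hinitbox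
          show z ∈ B
          rw [← Fin.snoc_init_self z, h]
          exact this

lemma fin2cases (t : Fin 2) : t = 0 ∨ t = 1 := by omega

noncomputable def boxIso {k n : ℕ} (a b : Fin n → Fin k) (hab : ∀ i, a i ≠ b i) :
    ((hammingGraph k n).induce (box a b)) ≃g (hammingGraph 2 n) where
  toFun x := fun i => if (x : Fin n → Fin k) i = a i then 0 else 1
  invFun ε := ⟨fun i => if ε i = 0 then a i else b i, fun i => by
    by_cases h : ε i = 0 <;> simp [h]⟩
  left_inv := by
    rintro ⟨x, hx⟩
    apply Subtype.ext
    funext i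
    rcases hx i with h | h
    · simp [h]
    · have : x i ≠ a i := by rw [h]; exact (hab i).symm
      simp [h, Ne.symm (hab i)]
  right_inv := by
    intro ε
    funext i
    rcases fin2cases (ε i) with h | h <;> simp [h, (hab i).symm, Ne.symm (hab i)]
  map_rel_iff' := by
    rintro ⟨x, hx⟩ ⟨y, hy⟩
    show hammingDist (fun i => if x i = a i then (0 : Fin 2) else 1)
        (fun i => if y i = a i then (0 : Fin 2) else 1) = 1 ↔ hammingDist x y = 1
    have hd : hammingDist (fun i => if x i = a i then (0 : Fin 2) else 1)
        (fun i => if y i = a i then (0 : Fin 2) else 1) = hammingDist x y := by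
      unfold hammingDist
      congr 1
      apply Finset.filter_congr
      intro i _
      rcases hx i with h1 | h1 <;> rcases hy i with h2 | h2 <;>
        simp [h1, h2, hab i, (hab i).symm]
    rw [hd]

theorem stmt_3 (k n : ℕ) (B : Set (Fin n → Fin k))
    (hB : IsLatinBitrade B) (hne : B.Nonempty) :
    B.ncard = 2 ^ n ↔
      Nonempty (((hammingGraph k n).induce B) ≃g (hammingGraph 2 n)) := by
  constructor
  · intro hc
    obtain ⟨a, b, hab, rfl⟩ := (main n k B hB hne).2 hc
    exact ⟨boxIso a b hab⟩
  · rintro ⟨φ⟩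
    have : Nat.card B = Nat.card (Fin n → Fin 2) := Nat.card_congr φ.toEquiv
    rw [Nat.card_coe_set_eq] at this
    rw [this]
    simp [Nat.card_eq_fintype_card]
end

section
/- The number of latin bitrades (including the empty one) in Q_3^n is exactly 2^{2^n}. -/
open Function Finset
open scoped symmDiff

attribute [local instance] Classical.propDecidable

namespace LatinBitradeAux

variable {n : ℕ}

lemma inter_line (B : Set (Fin n → Fin 3)) (i : Fin n) (a : Fin n → Fin 3) :
    B ∩ line i a = (fun v => Function.update a i v) '' {v | Function.update a i v ∈ B} := by
  ext x
  constructor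
  · rintro ⟨hB, hl⟩
    have hx : x = Function.update a i (x i) := by
      funext j
      by_cases hj : j = i
      · subst hj; simp
      · rw [Function.update_of_ne hj]; exact hl j hj
    exact ⟨x i, show Function.update a i (x i) ∈ B by rw [← hx]; exact hB, hx.symm⟩
  · rintro ⟨v, hv, rfl⟩
    refine ⟨hv, fun j hj => Function.update_of_ne hj _ _⟩

lemma inter_line_ncard (B : Set (Fin n → Fin 3)) (i : Fin n) (a : Fin n → Fin 3) :
    (B ∩ line i a).ncard
      = (Finset.univ.filter (fun v : Fin 3 => Function.update a i v ∈ B)).card := by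
  rw [inter_line, Set.ncard_image_of_injective _ (fun v w h => by
    simpa using congrFun h i)]
  rw [← Set.ncard_coe_finset]
  congr 1
  ext v; simp

lemma bitrade_iff {B : Set (Fin n → Fin 3)} :
    IsLatinBitrade B ↔ ∀ (i : Fin n) (a : Fin n → Fin 3),
      (Finset.univ.filter (fun v : Fin 3 => Function.update a i v ∈ B)).card = 0 ∨
      (Finset.univ.filter (fun v : Fin 3 => Function.update a i v ∈ B)).card = 2 := by
  unfold IsLatinBitrade
  simp_rw [inter_line_ncard]

/-- The point of `{1,2}^n` corresponding to `f : Fin n → Fin 2`. -/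
def pt (f : Fin n → Fin 2) : Fin n → Fin 3 := fun i => (f i).succ

/-- The "box" bitrade: product of the pairs `{0, f i + 1}`. -/
def box (f : Fin n → Fin 2) : Set (Fin n → Fin 3) :=
  {x | ∀ i, x i = 0 ∨ x i = (f i).succ}

lemma pt_mem_box {f g : Fin n → Fin 2} : pt g ∈ box f ↔ g = f := by
  constructor
  · intro h
    funext i
    rcases h i with h0 | hs
    · exact absurd h0 (Fin.succ_ne_zero _)
    · exact Fin.succ_injective _ hs
  · rintro rfl i; right; rfl

lemma symmDiff_key : ∀ s t : Finset (Fin 3), (s.card = 0 ∨ s.card = 2) →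
    (t.card = 0 ∨ t.card = 2) → ((s ∆ t).card = 0 ∨ (s ∆ t).card = 2) := by decide

lemma bitrade_empty : IsLatinBitrade (∅ : Set (Fin n → Fin 3)) := by
  intro i a
  left
  simp

lemma bitrade_symmDiff {B C : Set (Fin n → Fin 3)} (hB : IsLatinBitrade B)
    (hC : IsLatinBitrade C) : IsLatinBitrade (B ∆ C) := by
  rw [bitrade_iff] at *
  intro i a
  have h : (Finset.univ.filter (fun v : Fin 3 => Function.update a i v ∈ B ∆ C))
      = (Finset.univ.filter (fun v : Fin 3 => Function.update a i v ∈ B)) ∆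
        (Finset.univ.filter (fun v : Fin 3 => Function.update a i v ∈ C)) := by
    ext v
    simp only [Finset.mem_symmDiff, Set.mem_symmDiff, mem_filter, mem_univ, true_and]
  rw [h]
  exact symmDiff_key _ _ (hB i a) (hC i a)

lemma bitrade_box (f : Fin n → Fin 2) : IsLatinBitrade (box f) := by
  rw [bitrade_iff]
  intro i a
  by_cases h : ∀ j, j ≠ i → (a j = 0 ∨ a j = (f j).succ)
  · right
    have he : Finset.univ.filter (fun v : Fin 3 => Function.update a i v ∈ box f)
        = {0, (f i).succ} := by
      ext v
      simp only [mem_filter, mem_univ, true_and, mem_insert, mem_singleton]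
      constructor
      · intro hv
        have := hv i
        simpa using this
      · intro hv j
        by_cases hj : j = i
        · subst hj; simpa using hv
        · rw [Function.update_of_ne hj]; exact h j hj
    rw [he, card_insert_of_notMem (by simp [(Fin.succ_ne_zero (f i)).symm]),
      card_singleton]
  · left
    rw [card_eq_zero, filter_eq_empty_iff]
    intro v _ hv
    push_neg at h
    obtain ⟨j, hj, h0, hs⟩ := h
    have := hv j
    rw [Function.update_of_ne hj] at this
    tauto

/-- A bitrade containing no point of `{1,2}^n` is empty. -/
lemma bitrade_eq_empty {B : Set (Fin n → Fin 3)} (hB : IsLatinBitrade B)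
    (h : ∀ f, pt f ∉ B) : B = ∅ := by
  have key : ∀ m : ℕ, ∀ x : Fin n → Fin 3, x ∈ B →
      (Finset.univ.filter (fun i => x i = 0)).card = m → False := by
    intro m
    induction m using Nat.strong_induction_on with
    | _ m ih =>
      intro x hx hm
      by_cases hz : ∃ i, x i = 0
      · obtain ⟨i, hi⟩ := hz
        have hcard := (bitrade_iff.mp hB) i x
        set s := Finset.univ.filter (fun v : Fin 3 => Function.update x i v ∈ B) with hs
        have h0s : (0 : Fin 3) ∈ s := by
          simp only [hs, mem_filter, mem_univ, true_and]
          rw [← hi, Function.update_eq_self]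
          exact hx
        have h2 : s.card = 2 := by
          rcases hcard with h | h
          · exact absurd (card_eq_zero.mp h ▸ h0s) (notMem_empty _)
          · exact h
        obtain ⟨v, hvs, hv0⟩ := Finset.exists_mem_ne
          (show 1 < s.card by rw [h2]; norm_num) (0 : Fin 3)
        have hy : Function.update x i v ∈ B := by
          simpa [hs] using hvs
        have hzf : Finset.univ.filter (fun j => Function.update x i v j = 0)
            = (Finset.univ.filter (fun j => x j = 0)).erase i := by
          ext j
          simp only [mem_filter, mem_univ, true_and, mem_erase]
          by_cases hj : j = i
          · subst hj; simp [hv0]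
          · rw [Function.update_of_ne hj]; tauto
        have hi' : i ∈ Finset.univ.filter (fun j => x j = 0) := by
          simp [hi]
        have hlt : ((Finset.univ.filter (fun j => x j = 0)).erase i).card < m := by
          rw [← hm]
          exact card_erase_lt_of_mem hi'
        exact ih _ (by rw [hzf]; exact hlt) _ hy rfl
      · push_neg at hz
        apply h (fun i => (x i).pred (hz i))
        have : pt (fun i => (x i).pred (hz i)) = x := by
          funext i
          simp [pt, Fin.succ_pred]
        rwa [this]
  ext x
  simp only [Set.mem_empty_iff_false, iff_false]
  intro hx
  exact key _ x hx rfl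

lemma bitrade_ext {B C : Set (Fin n → Fin 3)} (hB : IsLatinBitrade B)
    (hC : IsLatinBitrade C) (h : ∀ f, pt f ∈ B ↔ pt f ∈ C) : B = C := by
  have h1 : B ∆ C = ∅ := by
    apply bitrade_eq_empty (bitrade_symmDiff hB hC)
    intro f hf
    rw [Set.mem_symmDiff] at hf
    have := h f
    tauto
  have := symmDiff_eq_bot.mp (by rw [← Set.bot_eq_empty] at h1; exact h1)
  exact this

/-- Surjectivity: every subset of `{1,2}^n` is realized by some bitrade. -/
lemma surj_finset (T : Finset (Fin n → Fin 2)) :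
    ∃ B : Set (Fin n → Fin 3), IsLatinBitrade B ∧ ∀ f, (pt f ∈ B ↔ f ∈ T) := by
  induction T using Finset.induction_on with
  | empty => exact ⟨∅, bitrade_empty, by simp⟩
  | insert f T hfT ih =>
    obtain ⟨B, hB, hmem⟩ := ih
    refine ⟨box f ∆ B, bitrade_symmDiff (bitrade_box f) hB, fun g => ?_⟩
    rw [Set.mem_symmDiff]
    rw [hmem g]
    constructor
    · rintro (⟨hg, _⟩ | ⟨hg, _⟩)
      · rw [pt_mem_box] at hg; subst hg; exact mem_insert_self _ _
      · exact mem_insert_of_mem hg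
    · intro hg
      rcases Finset.mem_insert.mp hg with rfl | hg'
      · exact Or.inl ⟨pt_mem_box.mpr rfl, fun hc => hfT hc⟩
      · refine Or.inr ⟨hg', fun hc => hfT ?_⟩
        rw [pt_mem_box] at hc
        subst hc
        exact hg'

lemma surj (T : Set (Fin n → Fin 2)) :
    ∃ B : Set (Fin n → Fin 3), IsLatinBitrade B ∧ ∀ f, (pt f ∈ B ↔ f ∈ T) := by
  obtain ⟨B, hB, hmem⟩ := surj_finset T.toFinset
  exact ⟨B, hB, fun f => by rw [hmem f, Set.mem_toFinset]⟩

noncomputable def equiv : {B : Set (Fin n → Fin 3) | IsLatinBitrade B} ≃ Set (Fin n → Fin 2) where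
  toFun B := {f | pt f ∈ B.1}
  invFun T := ⟨(surj T).choose, (surj T).choose_spec.1⟩
  left_inv B := by
    apply Subtype.ext
    exact bitrade_ext (surj _).choose_spec.1 B.2 (fun f => (surj _).choose_spec.2 f)
  right_inv T := by
    ext f
    exact (surj T).choose_spec.2 f

end LatinBitradeAux

theorem stmt_5 (n : ℕ) :
    {B : Set (Fin n → Fin 3) | IsLatinBitrade B}.ncard = 2 ^ (2 ^ n) := by
  rw [← Nat.card_coe_set_eq, Nat.card_congr LatinBitradeAux.equiv,
    Nat.card_eq_fintype_card]
  simp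
end

section
/- If B_1 ⊆ Q_k^n and B_2 ⊆ Q_k^m are bipartite latin bitrades, then the Cartesian product B_1 × B_2 ⊆ Q_k^{n+m} is a bipartite latin bitrade. -/
/-- A latin bitrade is bipartite if the subgraph of the Hamming graph induced by it
is bipartite (2-colorable). -/
def IsBipartiteBitrade {k n : ℕ} (B : Set (Fin n → Fin k)) : Prop :=
  IsLatinBitrade B ∧ ((hammingGraph k n).induce B).Colorable 2

/-- The Cartesian product via concatenation of tuples. -/
def cartProd {k n m : ℕ} (B₁ : Set (Fin n → Fin k)) (B₂ : Set (Fin m → Fin k)) :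
    Set (Fin (n + m) → Fin k) :=
  {z | ∃ x ∈ B₁, ∃ y ∈ B₂, z = Fin.append x y}

/- Auxiliary lemmas -/

theorem hammingDist_append_aux {k n m : ℕ} (x x' : Fin n → Fin k) (y y' : Fin m → Fin k) :
    hammingDist (Fin.append x y) (Fin.append x' y') = hammingDist x x' + hammingDist y y' := by
  classical
  have key : ∀ i : Fin n ⊕ Fin m,
      (i ∈ Finset.univ.filter fun s : Fin n ⊕ Fin m =>
        Fin.append x y (finSumFinEquiv s) ≠ Fin.append x' y' (finSumFinEquiv s)) ↔
      finSumFinEquiv i ∈ Finset.univ.filter fun j =>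
        Fin.append x y j ≠ Fin.append x' y' j := by simp
  have h1 : hammingDist (Fin.append x y) (Fin.append x' y')
      = (Finset.univ.filter fun s : Fin n ⊕ Fin m =>
        Fin.append x y (finSumFinEquiv s) ≠ Fin.append x' y' (finSumFinEquiv s)).card :=
    (Finset.card_equiv finSumFinEquiv key).symm
  rw [h1, ← Finset.card_toLeft_add_card_toRight]
  congr 1
  · rw [hammingDist]
    congr 1
    ext a
    simp [Fin.append_left]
  · rw [hammingDist]
    congr 1
    ext a
    simp [Fin.append_right]

theorem append_parts_aux {k n m : ℕ} (z : Fin (n + m) → Fin k) :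
    z = Fin.append (fun j => z (Fin.castAdd m j)) (fun j => z (Fin.natAdd n j)) := by
  funext i
  cases i using Fin.addCases with
  | left j => simp [Fin.append_left]
  | right j => simp [Fin.append_right]

theorem append_left_inj_aux {k n m : ℕ} (c : Fin m → Fin k) :
    Function.Injective (fun x : Fin n → Fin k => Fin.append x c) := by
  intro x₁ x₂ h
  funext j
  have := congrFun h (Fin.castAdd m j)
  simpa [Fin.append_left] using this

theorem append_right_inj_aux {k n m : ℕ} (c : Fin n → Fin k) :
    Function.Injective (fun y : Fin m → Fin k => Fin.append c y) := by
  intro y₁ y₂ h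
  funext j
  have := congrFun h (Fin.natAdd n j)
  simpa [Fin.append_right] using this

theorem head_mem_aux {k n m : ℕ} {B₁ : Set (Fin n → Fin k)} {B₂ : Set (Fin m → Fin k)}
    {z : Fin (n + m) → Fin k} (hz : z ∈ cartProd B₁ B₂) :
    (fun j => z (Fin.castAdd m j)) ∈ B₁ := by
  obtain ⟨x, hx, y, hy, rfl⟩ := hz
  have : (fun j => Fin.append x y (Fin.castAdd m j)) = x := by
    funext j; simp [Fin.append_left]
  rw [this]; exact hx

theorem tail_mem_aux {k n m : ℕ} {B₁ : Set (Fin n → Fin k)} {B₂ : Set (Fin m → Fin k)}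
    {z : Fin (n + m) → Fin k} (hz : z ∈ cartProd B₁ B₂) :
    (fun j => z (Fin.natAdd n j)) ∈ B₂ := by
  obtain ⟨x, hx, y, hy, rfl⟩ := hz
  have : (fun j => Fin.append x y (Fin.natAdd n j)) = y := by
    funext j; simp [Fin.append_right]
  rw [this]; exact hy

theorem stmt_9 (k n m : ℕ) (B₁ : Set (Fin n → Fin k)) (B₂ : Set (Fin m → Fin k))
    (h₁ : IsBipartiteBitrade B₁) (h₂ : IsBipartiteBitrade B₂) :
    IsBipartiteBitrade (cartProd B₁ B₂) := by
  constructor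
  · -- latin bitrade
    intro i a
    cases i using Fin.addCases with
    | left i' =>
      by_cases hy : (fun j => a (Fin.natAdd n j)) ∈ B₂
      · have hset : cartProd B₁ B₂ ∩ line (Fin.castAdd m i') a
            = (fun x => Fin.append x (fun j => a (Fin.natAdd n j))) ''
              (B₁ ∩ line i' (fun j => a (Fin.castAdd m j))) := by
          ext z
          constructor
          · rintro ⟨⟨x, hx, y, hyB, rfl⟩, hline⟩
            have hyeq : y = fun j => a (Fin.natAdd n j) := by
              funext j
              have hne : (Fin.natAdd n j : Fin (n + m)) ≠ Fin.castAdd m i' := by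
                have := i'.isLt
                intro h
                have h2 := congrArg Fin.val h
                simp at h2
                omega
              have := hline (Fin.natAdd n j) hne
              simpa [Fin.append_right] using this
            refine ⟨x, ⟨hx, ?_⟩, by rw [hyeq]⟩
            intro j hj
            have hne : (Fin.castAdd m j : Fin (n + m)) ≠ Fin.castAdd m i' := by
              intro h
              exact hj (Fin.ext (by simpa [Fin.ext_iff] using h))
            have := hline (Fin.castAdd m j) hne
            simpa [Fin.append_left] using this
          · rintro ⟨x, ⟨hx, hxl⟩, rfl⟩
            refine ⟨⟨x, hx, _, hy, rfl⟩, ?_⟩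
            intro j hj
            cases j using Fin.addCases with
            | left j' =>
              have hne : j' ≠ i' := by
                intro h; exact hj (by rw [h])
              have := hxl j' hne
              simpa [Fin.append_left] using this
            | right j' => simp [Fin.append_right]
        rw [hset, Set.ncard_image_of_injective _ (append_left_inj_aux _)]
        exact h₁.1 i' _
      · left
        rw [Set.ncard_eq_zero]
        rw [Set.eq_empty_iff_forall_notMem]
        rintro z ⟨⟨x, hx, y, hyB, rfl⟩, hline⟩
        apply hy
        have hyeq : y = fun j => a (Fin.natAdd n j) := by
          funext j
          have hne : (Fin.natAdd n j : Fin (n + m)) ≠ Fin.castAdd m i' := by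
            have := i'.isLt
            intro h
            have h2 := congrArg Fin.val h
            simp at h2
            omega
          have := hline (Fin.natAdd n j) hne
          simpa [Fin.append_right] using this
        rw [← hyeq]; exact hyB
    | right i' =>
      by_cases hx : (fun j => a (Fin.castAdd m j)) ∈ B₁
      · have hset : cartProd B₁ B₂ ∩ line (Fin.natAdd n i') a
            = (fun y => Fin.append (fun j => a (Fin.castAdd m j)) y) ''
              (B₂ ∩ line i' (fun j => a (Fin.natAdd n j))) := by
          ext z
          constructor
          · rintro ⟨⟨x, hxB, y, hyB, rfl⟩, hline⟩
            have hxeq : x = fun j => a (Fin.castAdd m j) := by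
              funext j
              have hne : (Fin.castAdd m j : Fin (n + m)) ≠ Fin.natAdd n i' := by
                have := j.isLt
                intro h
                have h2 := congrArg Fin.val h
                simp at h2
                omega
              have := hline (Fin.castAdd m j) hne
              simpa [Fin.append_left] using this
            refine ⟨y, ⟨hyB, ?_⟩, by rw [hxeq]⟩
            intro j hj
            have hne : (Fin.natAdd n j : Fin (n + m)) ≠ Fin.natAdd n i' := by
              intro h
              exact hj (Fin.ext (by simpa [Fin.ext_iff] using h))
            have := hline (Fin.natAdd n j) hne
            simpa [Fin.append_right] using this
          · rintro ⟨y, ⟨hyB, hyl⟩, rfl⟩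
            refine ⟨⟨_, hx, y, hyB, rfl⟩, ?_⟩
            intro j hj
            cases j using Fin.addCases with
            | left j' => simp [Fin.append_left]
            | right j' =>
              have hne : j' ≠ i' := by
                intro h; exact hj (by rw [h])
              have := hyl j' hne
              simpa [Fin.append_right] using this
        rw [hset, Set.ncard_image_of_injective _ (append_right_inj_aux _)]
        exact h₂.1 i' _
      · left
        rw [Set.ncard_eq_zero]
        rw [Set.eq_empty_iff_forall_notMem]
        rintro z ⟨⟨x, hxB, y, hyB, rfl⟩, hline⟩
        apply hx
        have hxeq : x = fun j => a (Fin.castAdd m j) := by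
          funext j
          have hne : (Fin.castAdd m j : Fin (n + m)) ≠ Fin.natAdd n i' := by
            have := j.isLt
            intro h
            have h2 := congrArg Fin.val h
            simp at h2
            omega
          have := hline (Fin.castAdd m j) hne
          simpa [Fin.append_left] using this
        rw [← hxeq]; exact hxB
  · -- bipartite
    obtain ⟨c₁⟩ := h₁.2
    obtain ⟨c₂⟩ := h₂.2
    refine ⟨SimpleGraph.Coloring.mk
      (fun z => c₁ ⟨fun j => z.1 (Fin.castAdd m j), head_mem_aux z.2⟩
        + c₂ ⟨fun j => z.1 (Fin.natAdd n j), tail_mem_aux z.2⟩) ?_⟩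
    rintro ⟨v, hv⟩ ⟨w, hw⟩ hadj
    have hd : hammingDist v w = 1 := hadj
    have hsplit : hammingDist (fun j => v (Fin.castAdd m j)) (fun j => w (Fin.castAdd m j))
        + hammingDist (fun j => v (Fin.natAdd n j)) (fun j => w (Fin.natAdd n j)) = 1 := by
      rw [← hammingDist_append_aux, ← append_parts_aux, ← append_parts_aux]
      exact hd
    set d1 := hammingDist (fun j => v (Fin.castAdd m j)) (fun j => w (Fin.castAdd m j)) with hd1
    set d2 := hammingDist (fun j => v (Fin.natAdd n j)) (fun j => w (Fin.natAdd n j)) with hd2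
    rcases Nat.eq_zero_or_pos d2 with h2 | h2
    · -- tails equal, heads adjacent
      have hteq : (fun j => v (Fin.natAdd n j)) = fun j => w (Fin.natAdd n j) :=
        hammingDist_eq_zero.mp h2
      have hd1' : d1 = 1 := by omega
      have hadj1 : ((hammingGraph k n).induce B₁).Adj
          ⟨fun j => v (Fin.castAdd m j), head_mem_aux hv⟩
          ⟨fun j => w (Fin.castAdd m j), head_mem_aux hw⟩ := hd1'
      have hne := c₁.valid hadj1
      have heq : c₂ ⟨fun j => v (Fin.natAdd n j), tail_mem_aux hv⟩
          = c₂ ⟨fun j => w (Fin.natAdd n j), tail_mem_aux hw⟩ := by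
        congr 1
        exact Subtype.ext hteq
      simp only []
      rw [heq]
      intro hcontra
      exact hne (add_right_cancel hcontra)
    · have hd2' : d2 = 1 := by omega
      have hd1' : d1 = 0 := by omega
      have hheq : (fun j => v (Fin.castAdd m j)) = fun j => w (Fin.castAdd m j) :=
        hammingDist_eq_zero.mp hd1'
      have hadj2 : ((hammingGraph k m).induce B₂).Adj
          ⟨fun j => v (Fin.natAdd n j), tail_mem_aux hv⟩
          ⟨fun j => w (Fin.natAdd n j), tail_mem_aux hw⟩ := hd2'
      have hne := c₂.valid hadj2
      have heq : c₁ ⟨fun j => v (Fin.castAdd m j), head_mem_aux hv⟩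
          = c₁ ⟨fun j => w (Fin.castAdd m j), head_mem_aux hw⟩ := by
        congr 1
        exact Subtype.ext hheq
      simp only []
      rw [heq]
      intro hcontra
      exact hne (add_left_cancel hcontra)
end

section
/- Let B_1, B_2 ⊆ Q_k^n be bipartite latin bitrades such that the symmetric difference B_1 △ B_2 is a latin bitrade and the subgraph of the Hamming graph Γ Q_k^n induced by B_1 ∩ B_2 is connected. Then B_1 △ B_2 is a bipartite latin bitrade. -/
/-! ### Auxiliary lemmas -/

def flip2 : Fin 2 → Fin 2 := fun a => if a = 0 then 1 else 0

lemma flip2_ne (a : Fin 2) : flip2 a ≠ a := by fin_cases a <;> decide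

lemma flip2_inj {a b : Fin 2} (h : a ≠ b) : flip2 a ≠ flip2 b := by
  fin_cases a <;> fin_cases b <;> simp_all <;> decide

lemma fin2_step {a b c d : Fin 2} (h1 : a ≠ b) (h2 : c ≠ d) : (a = c) ↔ (b = d) := by
  fin_cases a <;> fin_cases b <;> fin_cases c <;> fin_cases d <;> simp_all

lemma fin2_cross {a b c : Fin 2} (h1 : a ≠ b) (h2 : b ≠ c) : a = c := by
  fin_cases a <;> fin_cases b <;> fin_cases c <;> simp_all

lemma line_self {k n : ℕ} (i : Fin n) (a : Fin n → Fin k) : a ∈ line i a :=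
  fun _ _ => rfl

lemma adj_of_line {k n : ℕ} {i : Fin n} {a x y : Fin n → Fin k}
    (hx : x ∈ line i a) (hy : y ∈ line i a) (hxy : x ≠ y) :
    (hammingGraph k n).Adj x y := by
  show hammingDist x y = 1
  have hsub : ∀ j, x j ≠ y j → j = i := by
    intro j hj
    by_contra hji
    exact hj ((hx j hji).trans (hy j hji).symm)
  obtain ⟨j, hj⟩ := Function.ne_iff.mp hxy
  have hji := hsub j hj
  subst hji
  show (Finset.univ.filter fun l => x l ≠ y l).card = 1
  have : (Finset.univ.filter fun l => x l ≠ y l) = {j} := by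
    ext l
    simp only [Finset.mem_filter, Finset.mem_univ, true_and, Finset.mem_singleton]
    exact ⟨hsub l, fun h => h ▸ hj⟩
  rw [this, Finset.card_singleton]

lemma line_of_adj {k n : ℕ} {x y : Fin n → Fin k}
    (h : (hammingGraph k n).Adj x y) : ∃ i, y ∈ line i x := by
  have h' : (Finset.univ.filter fun l => x l ≠ y l).card = 1 := h
  obtain ⟨i, hi⟩ := Finset.card_eq_one.mp h'
  refine ⟨i, fun j hj => ?_⟩
  by_contra hne
  have : j ∈ (Finset.univ.filter fun l => x l ≠ y l) := by
    simp only [Finset.mem_filter, Finset.mem_univ, true_and]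
    exact fun h => hne h.symm
  rw [hi, Finset.mem_singleton] at this
  exact hj this

lemma bitrade_pair {k n : ℕ} {B : Set (Fin n → Fin k)} (hB : IsLatinBitrade B)
    {x : Fin n → Fin k} (hx : x ∈ B) (i : Fin n) :
    ∃ z, z ∈ B ∧ z ≠ x ∧ z ∈ line i x ∧ B ∩ line i x = {x, z} := by
  have hxmem : x ∈ B ∩ line i x := ⟨hx, line_self i x⟩
  rcases hB i x with h0 | h2
  · exfalso
    have := (Set.ncard_pos (Set.toFinite _)).mpr ⟨x, hxmem⟩
    omega
  · obtain ⟨a, b, hab, hset⟩ := Set.ncard_eq_two.mp h2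
    have hx' : x ∈ ({a, b} : Set (Fin n → Fin k)) := hset ▸ hxmem
    rcases hx' with rfl | rfl
    · have hb : b ∈ B ∩ line i x := hset ▸ (by simp : b ∈ ({x, b} : Set _))
      exact ⟨b, hb.1, fun h => hab h.symm, hb.2, hset⟩
    · have ha : a ∈ B ∩ line i x := hset ▸ (by simp : a ∈ ({a, x} : Set _))
      exact ⟨a, ha.1, hab, ha.2, by rw [hset, Set.pair_comm]⟩

lemma cross_neighbor {k n : ℕ} {B₁ B₂ : Set (Fin n → Fin k)}
    (h1 : IsLatinBitrade B₁) (hsd : IsLatinBitrade (symmDiff B₁ B₂))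
    {x y : Fin n → Fin k} (hx1 : x ∈ B₁) (hx2 : x ∉ B₂) (hy2 : y ∈ B₂) (hy1 : y ∉ B₁)
    (hadj : (hammingGraph k n).Adj x y) :
    ∃ z, z ∈ B₁ ∧ z ∈ B₂ ∧ (hammingGraph k n).Adj x z ∧ (hammingGraph k n).Adj y z := by
  obtain ⟨i, hyline⟩ := line_of_adj hadj
  have hxsd : x ∈ symmDiff B₁ B₂ := Set.mem_symmDiff.mpr (Or.inl ⟨hx1, hx2⟩)
  have hysd : y ∈ symmDiff B₁ B₂ := Set.mem_symmDiff.mpr (Or.inr ⟨hy2, hy1⟩)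
  obtain ⟨w, _, hwx, _, hset⟩ := bitrade_pair hsd hxsd i
  have hxy : x ≠ y := fun h => hy1 (h ▸ hx1)
  have hyw : y = w := by
    have : y ∈ symmDiff B₁ B₂ ∩ line i x := ⟨hysd, hyline⟩
    rw [hset] at this
    rcases this with h | h
    · exact absurd h hxy.symm
    · exact h
  obtain ⟨z, hz1, hzx, hzline, hset1⟩ := bitrade_pair h1 hx1 i
  have hznsd : z ∉ symmDiff B₁ B₂ := by
    intro hz
    have : z ∈ symmDiff B₁ B₂ ∩ line i x := ⟨hz, hzline⟩
    rw [hset] at this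
    rcases this with h | h
    · exact hzx h
    · exact hy1 ((h.trans hyw.symm) ▸ hz1)
  have hz2 : z ∈ B₂ := by
    by_contra hz2
    exact hznsd (Set.mem_symmDiff.mpr (Or.inl ⟨hz1, hz2⟩))
  have hzy : z ≠ y := fun h => hy1 (h ▸ hz1)
  exact ⟨z, hz1, hz2, (adj_of_line hzline (line_self i x) hzx).symm,
    (adj_of_line hzline hyline hzy).symm⟩

theorem stmt_11 (k n : ℕ) (B₁ B₂ : Set (Fin n → Fin k))
    (h₁ : IsBipartiteBitrade B₁) (h₂ : IsBipartiteBitrade B₂)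
    (hsd : IsLatinBitrade (symmDiff B₁ B₂))
    (hconn : ((hammingGraph k n).induce (B₁ ∩ B₂)).Connected) :
    IsBipartiteBitrade (symmDiff B₁ B₂) := by
  obtain ⟨hB₁, hc₁⟩ := h₁
  obtain ⟨hB₂, hc₂⟩ := h₂
  refine ⟨hsd, ?_⟩
  classical
  obtain ⟨C₁⟩ := hc₁
  obtain ⟨C₂⟩ := hc₂
  -- colorings as functions with membership proofs
  set c₁ : ∀ x : Fin n → Fin k, x ∈ B₁ → Fin 2 := fun x hx => C₁ ⟨x, hx⟩ with hc₁def
  set c₂ : ∀ x : Fin n → Fin k, x ∈ B₂ → Fin 2 := fun x hx => C₂ ⟨x, hx⟩ with hc₂def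
  have valid₁ : ∀ x y (hx : x ∈ B₁) (hy : y ∈ B₁), (hammingGraph k n).Adj x y →
      c₁ x hx ≠ c₁ y hy := by
    intro x y hx hy h
    exact C₁.valid (by exact h)
  have valid₂ : ∀ x y (hx : x ∈ B₂) (hy : y ∈ B₂), (hammingGraph k n).Adj x y →
      c₂ x hx ≠ c₂ y hy := by
    intro x y hx hy h
    exact C₂.valid (by exact h)
  -- basepoint of the connected intersection
  have hne : Nonempty ↥(B₁ ∩ B₂) := hconn.nonempty
  obtain ⟨⟨v₀, hv₀⟩⟩ := hne
  -- agreement status is constant on the connected intersection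
  have walkAgree : ∀ (u v : ↥(B₁ ∩ B₂)),
      ((hammingGraph k n).induce (B₁ ∩ B₂)).Walk u v →
      ((c₁ u u.2.1 = c₂ u u.2.2) ↔ (c₁ v v.2.1 = c₂ v v.2.2)) := by
    intro u v p
    induction p with
    | nil => rfl
    | @cons u w v h p ih =>
      have hadj : (hammingGraph k n).Adj ↑u ↑w := h
      have step : (c₁ u u.2.1 = c₂ u u.2.2) ↔ (c₁ w w.2.1 = c₂ w w.2.2) :=
        fin2_step (valid₁ u w u.2.1 w.2.1 hadj) (valid₂ u w u.2.2 w.2.2 hadj)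
      exact step.trans ih
  have agree : ∀ x (hx : x ∈ B₁ ∩ B₂),
      (c₁ x hx.1 = c₂ x hx.2) ↔ (c₁ v₀ hv₀.1 = c₂ v₀ hv₀.2) := by
    intro x hx
    obtain ⟨p⟩ := hconn.preconnected ⟨x, hx⟩ ⟨v₀, hv₀⟩
    exact walkAgree _ _ p
  -- normalize c₂ so that it agrees with c₁ on the intersection
  set d₂ : ∀ x : Fin n → Fin k, x ∈ B₂ → Fin 2 :=
    fun x hx => if c₁ v₀ hv₀.1 = c₂ v₀ hv₀.2 then c₂ x hx else flip2 (c₂ x hx) with hd₂def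
  have validd₂ : ∀ x y (hx : x ∈ B₂) (hy : y ∈ B₂), (hammingGraph k n).Adj x y →
      d₂ x hx ≠ d₂ y hy := by
    intro x y hx hy h
    simp only [hd₂def]
    split
    · exact valid₂ x y hx hy h
    · exact flip2_inj (valid₂ x y hx hy h)
  have agreed : ∀ x (hx : x ∈ B₁ ∩ B₂), c₁ x hx.1 = d₂ x hx.2 := by
    intro x hx
    simp only [hd₂def]
    split
    · exact (agree x hx).mpr (by assumption)
    · have hne' : c₁ x hx.1 ≠ c₂ x hx.2 := fun h => ‹¬_› ((agree x hx).mp h)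
      revert hne'
      generalize c₁ x hx.1 = a
      generalize c₂ x hx.2 = b
      fin_cases a <;> fin_cases b <;> simp_all [flip2]
  -- the coloring of the symmetric difference
  refine ⟨SimpleGraph.Coloring.mk
    (fun v => if h : (v : Fin n → Fin k) ∈ B₁ then c₁ v h
      else flip2 (d₂ v (by
        have := v.2
        rcases Set.mem_symmDiff.mp this with h' | h'
        · exact absurd h'.1 h
        · exact h'.1))) ?_⟩
  rintro ⟨x, hx⟩ ⟨y, hy⟩ hadj'
  have hadj : (hammingGraph k n).Adj x y := hadj'
  rcases Set.mem_symmDiff.mp hx with ⟨hx1, hx2⟩ | ⟨hx2, hx1⟩ <;>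
    rcases Set.mem_symmDiff.mp hy with ⟨hy1, hy2⟩ | ⟨hy2, hy1⟩
  · simp only [dif_pos hx1, dif_pos hy1]
    exact valid₁ x y hx1 hy1 hadj
  · -- x ∈ B₁ \ B₂, y ∈ B₂ \ B₁
    simp only [dif_pos hx1, dif_neg hy1]
    obtain ⟨z, hz1, hz2, hxz, hyz⟩ := cross_neighbor hB₁ hsd hx1 hx2 hy2 hy1 hadj
    have e1 : c₁ x hx1 ≠ c₁ z hz1 := valid₁ x z hx1 hz1 hxz
    have e2 : d₂ y hy2 ≠ d₂ z hz2 := validd₂ y z hy2 hz2 hyz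
    have e3 : c₁ z hz1 = d₂ z hz2 := agreed z ⟨hz1, hz2⟩
    have : c₁ x hx1 = flip2 (c₁ x hx1) → False := fun h => flip2_ne _ h.symm
    have key : d₂ y hy2 = c₁ x hx1 := by
      have := fin2_cross e2 (e3.symm.trans_ne (Ne.symm e1) : d₂ z hz2 ≠ c₁ x hx1)
      exact this
    intro hcontra
    rw [key] at hcontra
    exact flip2_ne _ hcontra.symm
  · -- x ∈ B₂ \ B₁, y ∈ B₁ \ B₂
    simp only [dif_neg hx1, dif_pos hy1]
    obtain ⟨z, hz1, hz2, hyz, hxz⟩ := cross_neighbor hB₁ hsd hy1 hy2 hx2 hx1 hadj.symm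
    have e1 : c₁ y hy1 ≠ c₁ z hz1 := valid₁ y z hy1 hz1 hyz
    have e2 : d₂ x hx2 ≠ d₂ z hz2 := validd₂ x z hx2 hz2 hxz
    have e3 : c₁ z hz1 = d₂ z hz2 := agreed z ⟨hz1, hz2⟩
    have key : d₂ x hx2 = c₁ y hy1 := fin2_cross e2 (e3.symm.trans_ne (Ne.symm e1))
    intro hcontra
    rw [key] at hcontra
    exact flip2_ne _ hcontra
  · simp only [dif_neg hx1, dif_neg hy1]
    exact flip2_inj (validd₂ x y hx2 hy2 hadj)
end

section
/- Let C be the set of all 2-element subsets of Q_4, and for each function g : Q_4^n → C let F(g) = {(a_1,…,a_n,a) ∈ Q_4^{n+1} : a ∈ g(a_1,…,a_n)}. Then F(g) is a 2-fold MDS code in Q_4^{n+1} if and only if for every c ∈ C and every 1-dimensional face F of Q_4^n, the function g takes the values c and Q_4 \ c on F the same number of times. -/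
/-- A `t`-fold MDS code: a set meeting every 1-dimensional face in exactly `t` elements. -/
def IsMDSFold {k n : ℕ} (t : ℕ) (W : Set (Fin n → Fin k)) : Prop :=
  ∀ (i : Fin n) (a : Fin n → Fin k), (W ∩ line i a).ncard = t

/-- For `g : Q_4^n → C` (where `C` is the set of 2-element subsets of `Q_4`), the set
`F(g) = {(a₁,…,aₙ,a) : a ∈ g(a₁,…,aₙ)} ⊆ Q_4^{n+1}`. -/
def Fg {n : ℕ} (g : (Fin n → Fin 4) → Finset (Fin 4)) : Set (Fin (n + 1) → Fin 4) :=
  {z | z (Fin.last n) ∈ g (fun i => z i.castSucc)}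

open Finset in
lemma core (f : Fin 4 → Finset (Fin 4)) (hf : ∀ t, (f t).card = 2) :
    (∀ v : Fin 4, (Finset.univ.filter (fun t => v ∈ f t)).card = 2) ↔
      (∀ c : Finset (Fin 4), c.card = 2 →
        (Finset.univ.filter (fun t => f t = c)).card =
          (Finset.univ.filter (fun t => f t = cᶜ)).card) := by
  have hcount : ∀ v : Fin 4, ∀ c1 c2 c3 : Finset (Fin 4),
      (∀ s : Finset (Fin 4), s.card = 2 →
        (if v ∈ s then (1:ℕ) else 0) =
          (if s = c1 then 1 else 0) + (if s = c2 then 1 else 0) + (if s = c3 then 1 else 0)) →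
      (Finset.univ.filter (fun t => v ∈ f t)).card =
        (Finset.univ.filter (fun t => f t = c1)).card
          + (Finset.univ.filter (fun t => f t = c2)).card
          + (Finset.univ.filter (fun t => f t = c3)).card := by
    intro v c1 c2 c3 hpt
    rw [Finset.card_filter, Finset.card_filter, Finset.card_filter, Finset.card_filter]
    rw [← Finset.sum_add_distrib, ← Finset.sum_add_distrib]
    exact Finset.sum_congr rfl (fun t _ => hpt (f t) (hf t))
  have e0 := hcount 0 {0,1} {0,2} {0,3} (by decide)
  have e1 := hcount 1 {0,1} {1,2} {1,3} (by decide)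
  have e2 := hcount 2 {0,2} {1,2} {2,3} (by decide)
  have e3 := hcount 3 {0,3} {1,3} {2,3} (by decide)
  have etot : (Finset.univ.filter (fun t => f t = ({0,1} : Finset (Fin 4)))).card
      + (Finset.univ.filter (fun t => f t = ({0,2} : Finset (Fin 4)))).card
      + (Finset.univ.filter (fun t => f t = ({0,3} : Finset (Fin 4)))).card
      + (Finset.univ.filter (fun t => f t = ({1,2} : Finset (Fin 4)))).card
      + (Finset.univ.filter (fun t => f t = ({1,3} : Finset (Fin 4)))).card
      + (Finset.univ.filter (fun t => f t = ({2,3} : Finset (Fin 4)))).card = 4 := by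
    have hpt : ∀ s : Finset (Fin 4), s.card = 2 →
        (1:ℕ) = (if s = ({0,1} : Finset (Fin 4)) then 1 else 0) + (if s = {0,2} then 1 else 0)
          + (if s = {0,3} then 1 else 0) + (if s = {1,2} then 1 else 0)
          + (if s = {1,3} then 1 else 0) + (if s = {2,3} then 1 else 0) := by decide
    rw [Finset.card_filter, Finset.card_filter, Finset.card_filter, Finset.card_filter,
      Finset.card_filter, Finset.card_filter, ← Finset.sum_add_distrib, ← Finset.sum_add_distrib,
      ← Finset.sum_add_distrib, ← Finset.sum_add_distrib, ← Finset.sum_add_distrib]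
    calc ∑ t : Fin 4, ((if f t = ({0,1} : Finset (Fin 4)) then (1:ℕ) else 0)
            + (if f t = {0,2} then 1 else 0) + (if f t = {0,3} then 1 else 0)
            + (if f t = {1,2} then 1 else 0) + (if f t = {1,3} then 1 else 0)
            + (if f t = {2,3} then 1 else 0))
        = ∑ _t : Fin 4, (1:ℕ) :=
          Finset.sum_congr rfl (fun t _ => (hpt (f t) (hf t)).symm)
      _ = 4 := by simp
  have hc2 : ∀ c : Finset (Fin 4), c.card = 2 →
      c = {0,1} ∨ c = {0,2} ∨ c = {0,3} ∨ c = {1,2} ∨ c = {1,3} ∨ c = {2,3} := by decide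
  have p1 : ({0,1} : Finset (Fin 4))ᶜ = {2,3} := by decide
  have p2 : ({0,2} : Finset (Fin 4))ᶜ = {1,3} := by decide
  have p3 : ({0,3} : Finset (Fin 4))ᶜ = {1,2} := by decide
  have p4 : ({1,2} : Finset (Fin 4))ᶜ = {0,3} := by decide
  have p5 : ({1,3} : Finset (Fin 4))ᶜ = {0,2} := by decide
  have p6 : ({2,3} : Finset (Fin 4))ᶜ = {0,1} := by decide
  constructor
  · intro hA c hc
    have h0 := hA 0; have h1 := hA 1; have h2 := hA 2; have h3 := hA 3
    rw [e0] at h0; rw [e1] at h1; rw [e2] at h2; rw [e3] at h3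
    rcases hc2 c hc with h | h | h | h | h | h <;> subst h <;>
      simp only [p1, p2, p3, p4, p5, p6] <;> omega
  · intro hB v
    have q1 := hB {0,1} (by decide)
    have q2 := hB {0,2} (by decide)
    have q3 := hB {0,3} (by decide)
    rw [p1] at q1; rw [p2] at q2; rw [p3] at q3
    have hvv : v = 0 ∨ v = 1 ∨ v = 2 ∨ v = 3 := by omega
    rcases hvv with h | h | h | h <;> subst h <;>
      [rw [e0]; rw [e1]; rw [e2]; rw [e3]] <;> omega

lemma line_mem_iff {n : ℕ} (i : Fin n) (a x : Fin n → Fin 4) :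
    x ∈ line i a ↔ x = Function.update a i (x i) := by
  constructor
  · intro hx
    funext j
    by_cases hj : j = i
    · subst hj; simp
    · rw [Function.update_of_ne hj]; exact hx j hj
  · intro hx j hj
    rw [hx]; rw [Function.update_of_ne hj]

lemma ncard_line_filter {n : ℕ} (p : (Fin n → Fin 4) → Prop) [DecidablePred p]
    (i : Fin n) (a : Fin n → Fin 4) :
    {x ∈ line i a | p x}.ncard
      = (Finset.univ.filter (fun v : Fin 4 => p (Function.update a i v))).card := by
  have he : Function.Injective (fun v : Fin 4 => Function.update a i v) := by
    intro v w h
    have := congrFun h i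
    simpa using this
  have hst : {x ∈ line i a | p x}
      = (fun v : Fin 4 => Function.update a i v) '' {v | p (Function.update a i v)} := by
    ext x
    constructor
    · rintro ⟨hx, hp⟩
      have hx' := (line_mem_iff i a x).mp hx
      refine ⟨x i, ?_, hx'.symm⟩
      show p (Function.update a i (x i))
      rw [← hx']; exact hp
    · rintro ⟨v, hv, rfl⟩
      refine ⟨(line_mem_iff i a _).mpr ?_, hv⟩
      simp
  rw [hst, Set.ncard_image_of_injective _ he, Set.ncard_eq_toFinset_card',
    Set.toFinset_setOf]

lemma inter_line_last {n : ℕ} (g : (Fin n → Fin 4) → Finset (Fin 4))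
    (a : Fin (n+1) → Fin 4) :
    (Fg g ∩ line (Fin.last n) a).ncard = (g (fun i => a i.castSucc)).card := by
  set x : Fin n → Fin 4 := fun i => a i.castSucc with hx
  have he : Function.Injective (fun v : Fin 4 => Fin.snoc x v : Fin 4 → Fin (n+1) → Fin 4) := by
    intro v w h
    have := congrFun h (Fin.last n)
    simpa using this
  have hst : Fg g ∩ line (Fin.last n) a
      = (fun v : Fin 4 => Fin.snoc x v) '' ↑(g x) := by
    ext z
    constructor
    · rintro ⟨hz1, hz2⟩
      have hxz : (fun i => z i.castSucc) = x :=
        funext fun i => hz2 i.castSucc (Fin.castSucc_lt_last i).ne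
      refine ⟨z (Fin.last n), ?_, ?_⟩
      · show z (Fin.last n) ∈ g x
        rw [← hxz]; exact hz1
      · show Fin.snoc x (z (Fin.last n)) = z
        rw [← hxz]; exact Fin.snoc_init_self z
    · rintro ⟨v, hv, rfl⟩
      constructor
      · simpa [Fg, Fin.snoc_last, Fin.snoc_castSucc] using hv
      · intro j hj
        rcases Fin.exists_castSucc_eq.mpr hj with ⟨i, rfl⟩
        simp [hx]
  rw [hst, Set.ncard_image_of_injective _ he, Set.ncard_coe_finset]

lemma inter_line_castSucc {n : ℕ} (g : (Fin n → Fin 4) → Finset (Fin 4))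
    (j : Fin n) (a : Fin (n+1) → Fin 4) :
    (Fg g ∩ line j.castSucc a).ncard
      = {x ∈ line j (Fin.init a) | a (Fin.last n) ∈ g x}.ncard := by
  set w : Fin 4 := a (Fin.last n) with hw
  have he : Function.Injective (fun x : Fin n → Fin 4 => (Fin.snoc x w : Fin (n+1) → Fin 4)) := by
    intro x y h
    funext i
    have := congrFun h i.castSucc
    simpa using this
  have hst : Fg g ∩ line j.castSucc a
      = (fun x : Fin n → Fin 4 => Fin.snoc x w) '' {x ∈ line j (Fin.init a) | w ∈ g x} := by
    ext z
    constructor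
    · rintro ⟨hz1, hz2⟩
      have hzl : z (Fin.last n) = w := hz2 (Fin.last n) (Fin.castSucc_lt_last j).ne'
      refine ⟨Fin.init z, ⟨?_, ?_⟩, ?_⟩
      · intro i hi
        have hne : i.castSucc ≠ j.castSucc := fun h => hi (Fin.castSucc_injective n h)
        exact hz2 i.castSucc hne
      · rw [← hzl]; exact hz1
      · show Fin.snoc (Fin.init z) w = z
        rw [← hzl]; exact Fin.snoc_init_self z
    · rintro ⟨x, ⟨hx1, hx2⟩, rfl⟩
      constructor
      · simpa [Fg, Fin.snoc_last, Fin.snoc_castSucc] using hx2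
      · intro m hm
        induction m using Fin.lastCases with
        | last => simp [hw]
        | cast i =>
          have hi : i ≠ j := fun h => hm (by rw [h])
          simp only [Fin.snoc_castSucc]
          exact hx1 i hi
  rw [hst, Set.ncard_image_of_injective _ he]

theorem stmt_18 (n : ℕ) (g : (Fin n → Fin 4) → Finset (Fin 4))
    (hg : ∀ x, (g x).card = 2) :
    IsMDSFold 2 (Fg g) ↔
      ∀ c : Finset (Fin 4), c.card = 2 →
        ∀ (i : Fin n) (a : Fin n → Fin 4),
          {x ∈ line i a | g x = c}.ncard = {x ∈ line i a | g x = cᶜ}.ncard := by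
  classical
  constructor
  · intro hW c hc i a
    rw [ncard_line_filter (fun x => g x = c), ncard_line_filter (fun x => g x = cᶜ)]
    refine (core (fun v => g (Function.update a i v)) (fun t => hg _)).mp ?_ c hc
    intro v
    have h := hW i.castSucc (Fin.snoc a v)
    rw [inter_line_castSucc] at h
    rw [Fin.init_snoc, Fin.snoc_last] at h
    rw [ncard_line_filter (fun x => v ∈ g x)] at h
    exact h
  · intro hB i a
    induction i using Fin.lastCases with
    | last =>
      rw [inter_line_last, hg]
    | cast j =>
      rw [inter_line_castSucc, ncard_line_filter (fun x => a (Fin.last n) ∈ g x)]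
      refine (core (fun v => g (Function.update (Fin.init a) j v)) (fun t => hg _)).mpr
        ?_ (a (Fin.last n))
      intro c hc
      have h := hB c hc j (Fin.init a)
      rw [ncard_line_filter (fun x => g x = c), ncard_line_filter (fun x => g x = cᶜ)] at h
      exact h
end
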